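/- arXiv:math/0701032 — 6 statements merged into one kernel-verified Lean document; each statement's English description precedes it below -/
import Mathlib

section
/- Let k, n, t, s be natural numbers with t ≤ k. The number of words w ∈ [k]^n such that lev_{[t]}(w) = s (i.e. with exactly s levels whose first element lies in {1,...,t}) equals Σ_{m=0}^{n} Σ_{i=0}^{m} (−1)^{n−m−s} C(m,i) · C(i+n−m−1, n−m) · C(n−m, s) · (k−t)^{m−i} · t^{i}. -/
open Finset

/-- The number of levels of the word `w : Fin n → Fin k` (encoding a word over the
alphabet `[k] = {1,…,k}`, position `p` carrying the letter `(w p : ℕ) + 1`) whose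
first element satisfies `X`. -/
def levCount (X : ℕ → Prop) [DecidablePred X] {k n : ℕ} (w : Fin n → Fin k) : ℕ :=
  (Finset.univ.filter (fun p : Fin n × Fin n =>
    (p.1 : ℕ) + 1 = (p.2 : ℕ) ∧ w p.1 = w p.2 ∧ X ((w p.1 : ℕ) + 1))).card

namespace LevAux
variable (k t : ℕ)

def lev {n : ℕ} (w : Fin n → Fin k) : ℕ :=
  (Finset.univ.filter (fun p : Fin n × Fin n =>
    (p.1 : ℕ) + 1 = (p.2 : ℕ) ∧ w p.1 = w p.2 ∧ ((w p.1 : ℕ) < t))).card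

lemma lev_zero (w : Fin 0 → Fin k) : lev k t w = 0 := by
  simp [lev]

lemma lev_one (w : Fin 1 → Fin k) : lev k t w = 0 := by
  rw [lev, Finset.card_eq_zero, Finset.filter_eq_empty_iff]
  rintro ⟨a, b⟩ -
  simp only [not_and]
  intro h
  exact absurd h (by omega)

lemma lev_cons {n : ℕ} (x : Fin k) (w : Fin (n+1) → Fin k) :
    lev k t (Fin.cons x w : Fin (n+2) → Fin k)
      = lev k t w + (if x = w 0 ∧ (x : ℕ) < t then 1 else 0) := by
  classical
  set v : Fin (n+2) → Fin k := Fin.cons x w with hv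
  set P : Fin (n+2) × Fin (n+2) → Prop := fun p =>
    (p.1 : ℕ) + 1 = (p.2 : ℕ) ∧ v p.1 = v p.2 ∧ ((v p.1 : ℕ) < t) with hP
  have hsplit := Finset.card_filter_add_card_filter_not
    (s := (Finset.univ.filter P)) (p := fun p => p.1 = (0 : Fin (n+2)))
  rw [Finset.filter_filter, Finset.filter_filter] at hsplit
  have h1 : (Finset.univ.filter (fun p : Fin (n+2) × Fin (n+2) => P p ∧ p.1 = 0)).card
      = (if x = w 0 ∧ (x : ℕ) < t then 1 else 0) := by
    split_ifs with hc
    · rw [Finset.card_eq_one]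
      refine ⟨((0 : Fin (n+2)), (1 : Fin (n+2))), ?_⟩
      ext ⟨a, b⟩
      simp only [Finset.mem_filter, Finset.mem_univ, true_and, Finset.mem_singleton,
        Prod.mk.injEq, hP]
      constructor
      · rintro ⟨⟨hab, heq, hlt⟩, ha⟩
        subst ha
        refine ⟨rfl, ?_⟩
        have : (b : ℕ) = 1 := by simpa using hab.symm
        exact Fin.ext (by simpa using this)
      · rintro ⟨ha, hb⟩
        subst ha; subst hb
        have e0 : v 0 = x := by simp [hv]
        have e1 : v 1 = w 0 := by
          have : (1 : Fin (n+2)) = Fin.succ 0 := rfl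
          rw [this]; simp [hv]
        refine ⟨⟨by simp, ?_, ?_⟩, rfl⟩
        · rw [e0, e1]; exact hc.1
        · rw [e0]; exact hc.2
    · rw [Finset.card_eq_zero, Finset.filter_eq_empty_iff]
      rintro ⟨a, b⟩ -
      simp only [hP]
      rintro ⟨⟨hab, heq, hlt⟩, ha⟩
      subst ha
      have hb : b = 1 := Fin.ext (by simpa using hab.symm)
      subst hb
      have e0 : v 0 = x := by simp [hv]
      have e1 : v 1 = w 0 := by
        have : (1 : Fin (n+2)) = Fin.succ 0 := rfl
        rw [this]; simp [hv]
      exact hc ⟨by rw [← e0, ← e1, heq], by rw [← e0]; exact hlt⟩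
  have h2 : (Finset.univ.filter (fun p : Fin (n+2) × Fin (n+2) => P p ∧ ¬ p.1 = 0))
      = (Finset.univ.filter (fun q : Fin (n+1) × Fin (n+1) =>
          (q.1 : ℕ) + 1 = (q.2 : ℕ) ∧ w q.1 = w q.2 ∧ ((w q.1 : ℕ) < t))).image
            (fun q => (q.1.succ, q.2.succ)) := by
    ext ⟨a, b⟩
    simp only [Finset.mem_filter, Finset.mem_univ, true_and, Finset.mem_image,
      Prod.exists, Prod.mk.injEq, hP]
    constructor
    · rintro ⟨⟨hab, heq, hlt⟩, ha⟩
      have hb : b ≠ 0 := by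
        intro h; subst h; simp at hab
      have ea : v a = w (a.pred ha) := by
        conv_lhs => rw [← Fin.succ_pred a ha]
        rw [hv, Fin.cons_succ]
      have eb : v b = w (b.pred hb) := by
        conv_lhs => rw [← Fin.succ_pred b hb]
        rw [hv, Fin.cons_succ]
      refine ⟨a.pred ha, b.pred hb, ⟨?_, ?_, ?_⟩, Fin.succ_pred a ha, Fin.succ_pred b hb⟩
      · have h0 : (a : ℕ) ≠ 0 := fun h => ha (Fin.ext h)
        simp only [Fin.coe_pred]
        omega
      · rw [← ea, ← eb]; exact heq
      · rw [← ea]; exact hlt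
    · rintro ⟨a', b', ⟨hab, heq, hlt⟩, ha, hb⟩
      subst ha; subst hb
      refine ⟨⟨?_, ?_, ?_⟩, Fin.succ_ne_zero a'⟩
      · simp; omega
      · rw [hv]; simpa [Fin.cons_succ] using heq
      · rw [hv]; simpa [Fin.cons_succ] using hlt
  have hinj : Function.Injective
      (fun q : Fin (n+1) × Fin (n+1) => (q.1.succ, q.2.succ)) := by
    rintro ⟨a, b⟩ ⟨c, d⟩ h
    simp only [Prod.mk.injEq, Fin.succ_inj] at h
    exact Prod.ext h.1 h.2
  have h2c : (Finset.univ.filter (fun p : Fin (n+2) × Fin (n+2) => P p ∧ ¬ p.1 = 0)).card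
      = lev k t w := by
    rw [h2, Finset.card_image_of_injective _ hinj, lev]
  have hlev : lev k t v = (Finset.univ.filter P).card := rfl
  have hgoal : lev k t v = lev k t w + (if x = w 0 ∧ (x : ℕ) < t then 1 else 0) := by
    omega
  exact hgoal

def Nc (n s : ℕ) : ℕ :=
  (Finset.univ.filter (fun w : Fin n → Fin k => lev k t w = s)).card

def Uc (n s : ℕ) (F : Finset (Fin k)) : ℕ :=
  (Finset.univ.filter (fun w : Fin (n+1) → Fin k => lev k t w = s ∧ w 0 ∈ F)).card

def smallF : Finset (Fin k) := Finset.univ.filter (fun a : Fin k => (a : ℕ) < t)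

lemma Uc_univ (n s : ℕ) : Uc k t n s Finset.univ = Nc k t (n+1) s := by
  simp [Uc, Nc]

lemma card_cons_split {n : ℕ} (P : (Fin (n+2) → Fin k) → Prop) [DecidablePred P]
    (F : Finset (Fin k)) :
    (Finset.univ.filter (fun w' : Fin (n+2) → Fin k => P w' ∧ w' 0 ∈ F)).card
      = ∑ x ∈ F, (Finset.univ.filter
          (fun w : Fin (n+1) → Fin k => P (Fin.cons x w))).card := by
  classical
  rw [Finset.card_eq_sum_card_fiberwise (f := fun w' => w' 0) (t := F)
    (fun w hw => (Finset.mem_filter.mp hw).2.2)]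
  refine Finset.sum_congr rfl fun x hx => ?_
  refine Finset.card_bij' (fun w' _ => Fin.tail w') (fun w _ => Fin.cons x w)
    ?_ ?_ ?_ ?_
  · intro w' hw'
    simp only [Finset.mem_filter, Finset.mem_univ, true_and] at hw' ⊢
    obtain ⟨⟨⟨hP, -⟩, h0⟩, -⟩ := And.intro hw' trivial
    rw [← h0, Fin.cons_self_tail]
    exact hP
  · intro w hw
    simp only [Finset.mem_filter, Finset.mem_univ, true_and] at hw ⊢
    exact ⟨⟨hw, by simp [hx]⟩, by simp⟩
  · intro w' hw'
    simp only [Finset.mem_filter, Finset.mem_univ, true_and] at hw'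
    have h0 : w' 0 = x := hw'.2
    show Fin.cons x (Fin.tail w') = w'
    rw [← h0]
    exact Fin.cons_self_tail w'
  · intro w hw
    simp

lemma sum_cond {n : ℕ} (s' : ℕ) (F : Finset (Fin k)) :
    ∑ x ∈ F, (Finset.univ.filter
        (fun w : Fin (n+1) → Fin k => lev k t w = s' ∧ (x = w 0 ∧ (x : ℕ) < t))).card
      = Uc k t n s' (F ∩ smallF k t) := by
  classical
  rw [Uc, Finset.card_eq_sum_card_fiberwise (f := fun w => w 0) (t := F)
    (fun w hw => Finset.mem_inter.mp (Finset.mem_filter.mp hw).2.2 |>.1)]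
  refine Finset.sum_congr rfl fun x hx => ?_
  congr 1
  rw [Finset.filter_filter]
  apply Finset.filter_congr
  intro w _
  simp only [smallF, Finset.mem_inter, Finset.mem_filter, Finset.mem_univ, true_and]
  constructor
  · rintro ⟨hl, hx0, hxt⟩
    exact ⟨⟨hl, by rw [← hx0]; exact ⟨hx, hxt⟩⟩, hx0.symm⟩
  · rintro ⟨⟨hl, hF, hsm⟩, h0⟩
    exact ⟨hl, h0.symm, by rw [← h0]; exact hsm⟩


lemma master (n s : ℕ) (F : Finset (Fin k)) :
    Uc k t (n+1) s F + Uc k t n s (F ∩ smallF k t)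
      = F.card * Nc k t (n+1) s
        + (if s = 0 then 0 else Uc k t n (s-1) (F ∩ smallF k t)) := by
  classical
  have step1 : Uc k t (n+1) s F
      = ∑ x ∈ F, (Finset.univ.filter
          (fun w : Fin (n+1) → Fin k => lev k t (Fin.cons x w) = s)).card :=
    card_cons_split k (fun w' => lev k t w' = s) F
  have perx : ∀ x : Fin k,
      (Finset.univ.filter (fun w : Fin (n+1) → Fin k => lev k t (Fin.cons x w) = s)).card
        + (Finset.univ.filter (fun w : Fin (n+1) → Fin k =>
            lev k t w = s ∧ (x = w 0 ∧ (x:ℕ) < t))).card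
      = Nc k t (n+1) s
        + (Finset.univ.filter (fun w : Fin (n+1) → Fin k =>
            lev k t w + 1 = s ∧ (x = w 0 ∧ (x:ℕ) < t))).card := by
    intro x
    have hA := Finset.card_filter_add_card_filter_not
      (s := Finset.univ.filter (fun w : Fin (n+1) → Fin k => lev k t (Fin.cons x w) = s))
      (p := fun w => x = w 0 ∧ (x:ℕ) < t)
    have hB := Finset.card_filter_add_card_filter_not
      (s := Finset.univ.filter (fun w : Fin (n+1) → Fin k => lev k t w = s))
      (p := fun w => x = w 0 ∧ (x:ℕ) < t)
    rw [Finset.filter_filter, Finset.filter_filter] at hA hB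
    have eA1 : Finset.univ.filter (fun w : Fin (n+1) → Fin k =>
          lev k t (Fin.cons x w) = s ∧ (x = w 0 ∧ (x:ℕ) < t))
        = Finset.univ.filter (fun w : Fin (n+1) → Fin k =>
          lev k t w + 1 = s ∧ (x = w 0 ∧ (x:ℕ) < t)) := by
      apply Finset.filter_congr
      intro w _
      rw [lev_cons k t x w]
      constructor
      · rintro ⟨h1, h2⟩
        rw [if_pos h2] at h1
        exact ⟨h1, h2⟩
      · rintro ⟨h1, h2⟩
        rw [if_pos h2]
        exact ⟨h1, h2⟩
    have eA2 : Finset.univ.filter (fun w : Fin (n+1) → Fin k =>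
          lev k t (Fin.cons x w) = s ∧ ¬(x = w 0 ∧ (x:ℕ) < t))
        = Finset.univ.filter (fun w : Fin (n+1) → Fin k =>
          lev k t w = s ∧ ¬(x = w 0 ∧ (x:ℕ) < t)) := by
      apply Finset.filter_congr
      intro w _
      rw [lev_cons k t x w]
      constructor
      · rintro ⟨h1, h2⟩
        rw [if_neg h2] at h1
        exact ⟨by simpa using h1, h2⟩
      · rintro ⟨h1, h2⟩
        rw [if_neg h2]
        exact ⟨by simpa using h1, h2⟩
    rw [eA1, eA2] at hA
    have hN : Nc k t (n+1) s
        = (Finset.univ.filter (fun w : Fin (n+1) → Fin k => lev k t w = s)).card := rfl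
    rw [← hA, hN, ← hB]
    ac_rfl
  have sum_eq : (∑ x ∈ F, (Finset.univ.filter
        (fun w : Fin (n+1) → Fin k => lev k t (Fin.cons x w) = s)).card)
      + (∑ x ∈ F, (Finset.univ.filter (fun w : Fin (n+1) → Fin k =>
            lev k t w = s ∧ (x = w 0 ∧ (x:ℕ) < t))).card)
      = (∑ _x ∈ F, Nc k t (n+1) s)
      + (∑ x ∈ F, (Finset.univ.filter (fun w : Fin (n+1) → Fin k =>
            lev k t w + 1 = s ∧ (x = w 0 ∧ (x:ℕ) < t))).card) := by
    rw [← Finset.sum_add_distrib, ← Finset.sum_add_distrib]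
    exact Finset.sum_congr rfl fun x _ => perx x
  rw [sum_cond] at sum_eq
  have hconst : (∑ _x ∈ F, Nc k t (n+1) s) = F.card * Nc k t (n+1) s := by
    rw [Finset.sum_const, smul_eq_mul]
  rw [hconst] at sum_eq
  have hlast : (∑ x ∈ F, (Finset.univ.filter (fun w : Fin (n+1) → Fin k =>
        lev k t w + 1 = s ∧ (x = w 0 ∧ (x:ℕ) < t))).card)
      = (if s = 0 then 0 else Uc k t n (s-1) (F ∩ smallF k t)) := by
    rcases s with _ | s'
    · rw [if_pos rfl]
      refine Finset.sum_eq_zero fun x _ => ?_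
      rw [Finset.card_eq_zero, Finset.filter_eq_empty_iff]
      intro w _
      simp
    · rw [if_neg (Nat.succ_ne_zero s')]
      have : ∀ x : Fin k, (Finset.univ.filter (fun w : Fin (n+1) → Fin k =>
            lev k t w + 1 = s' + 1 ∧ (x = w 0 ∧ (x:ℕ) < t)))
          = (Finset.univ.filter (fun w : Fin (n+1) → Fin k =>
            lev k t w = s' ∧ (x = w 0 ∧ (x:ℕ) < t))) := by
        intro x
        apply Finset.filter_congr
        intro w _
        simp
      simp only [this]
      rw [sum_cond]
      rfl
  rw [hlast] at sum_eq
  rw [step1]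
  exact sum_eq

lemma Nc_zero (s : ℕ) : Nc k t 0 s = if s = 0 then 1 else 0 := by
  rw [Nc]
  rcases s with _ | s
  · rw [if_pos rfl, Finset.filter_true_of_mem (fun w _ => lev_zero k t w),
      Finset.card_univ]
    simp
  · rw [if_neg (Nat.succ_ne_zero s), Finset.card_eq_zero, Finset.filter_eq_empty_iff]
    intro w _
    simp [lev_zero]

lemma Nc_one (s : ℕ) : Nc k t 1 s = if s = 0 then k else 0 := by
  rw [Nc]
  rcases s with _ | s
  · rw [if_pos rfl, Finset.filter_true_of_mem (fun w _ => lev_one k t w),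
      Finset.card_univ]
    simp
  · rw [if_neg (Nat.succ_ne_zero s), Finset.card_eq_zero, Finset.filter_eq_empty_iff]
    intro w _
    simp [lev_one]

lemma smallF_card (ht : t ≤ k) : (smallF k t).card = t := by
  have h : smallF k t = (Finset.range t).attachFin
      (fun m hm => lt_of_lt_of_le (Finset.mem_range.mp hm) ht) := by
    ext a
    simp [smallF, Finset.mem_attachFin]
  rw [h, Finset.card_attachFin, Finset.card_range]

lemma Uc_zero_small (ht : t ≤ k) (s : ℕ) :
    Uc k t 0 s (smallF k t) = if s = 0 then t else 0 := by
  rw [Uc]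
  rcases s with _ | s
  · rw [if_pos rfl]
    have h : (Finset.univ.filter (fun w : Fin 1 → Fin k =>
          lev k t w = 0 ∧ w 0 ∈ smallF k t))
        = Finset.univ.filter (fun w : Fin 1 → Fin k => w 0 ∈ smallF k t) := by
      apply Finset.filter_congr
      intro w _
      simp [lev_one]
    rw [h]
    have hc : (Finset.univ.filter (fun w : Fin 1 → Fin k => w 0 ∈ smallF k t)).card
        = (smallF k t).card := by
      refine Finset.card_bij' (fun w _ => w 0) (fun a _ => fun _ => a) ?_ ?_ ?_ ?_
      · intro w hw
        simpa using hw
      · intro a ha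
        simpa using ha
      · intro w hw
        funext i
        have hi : i = 0 := Fin.fin_one_eq_zero i
        rw [hi]
      · intro a ha
        rfl
    rw [hc, smallF_card k t ht]
  · rw [if_neg (Nat.succ_ne_zero s), Finset.card_eq_zero, Finset.filter_eq_empty_iff]
    intro w _
    simp [lev_one]

lemma TN (ht : t ≤ k) : ∀ n s : ℕ, (Uc k t n s (smallF k t) : ℤ)
    = (Nc k t (n+1) s : ℤ) - ((k:ℤ) - t) * Nc k t n s
  | 0, s => by
    rw [Uc_zero_small k t ht, Nc_zero, Nc_one]
    rcases s with _ | s <;> simp <;> ring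
  | (n+1), s => by
    have h1 := master k t n s Finset.univ
    have h2 := master k t n s (smallF k t)
    rw [Finset.univ_inter, Uc_univ, Finset.card_univ, Fintype.card_fin] at h1
    rw [Finset.inter_self, smallF_card k t ht] at h2
    have c1 := congrArg (fun m : ℕ => (m : ℤ)) h1
    have c2 := congrArg (fun m : ℕ => (m : ℤ)) h2
    push_cast at c1 c2
    rcases s with _ | s
    · simp only [if_pos rfl] at c1 c2
      push_cast at c1 c2
      linarith
    · simp only [if_neg (Nat.succ_ne_zero s)] at c1 c2
      push_cast at c1 c2
      linarith

lemma NR (ht : t ≤ k) (n s : ℕ) :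
    (Nc k t (n+2) s : ℤ) = ((k:ℤ) - 1) * Nc k t (n+1) s + ((k:ℤ) - t) * Nc k t n s
      + (if s = 0 then 0 else (Nc k t (n+1) (s-1) : ℤ)
          - ((k:ℤ) - t) * Nc k t n (s-1)) := by
  have h1 := master k t n s Finset.univ
  rw [Finset.univ_inter, Uc_univ, Finset.card_univ, Fintype.card_fin] at h1
  have c1 := congrArg (fun m : ℕ => (m : ℤ)) h1
  push_cast at c1
  have tn := TN k t ht n s
  rcases s with _ | s
  · rw [if_pos rfl]
    simp only [if_pos rfl] at c1
    push_cast at c1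
    linarith
  · rw [if_neg (Nat.succ_ne_zero s)]
    simp only [if_neg (Nat.succ_ne_zero s)] at c1
    push_cast at c1
    have tn' := TN k t ht n s
    simp only [Nat.succ_sub_one]
    linarith



def DZ (m p : ℕ) : ℤ :=
  ∑ i ∈ range (m+1),
    (m.choose i : ℤ) * ((i + p - 1).choose p : ℤ) * ((k:ℤ) - t) ^ (m - i) * (t:ℤ) ^ i

lemma DZ_zero_right (m : ℕ) : DZ k t m 0 = (k:ℤ) ^ m := by
  have h := add_pow ((t:ℤ)) ((k:ℤ) - t) m
  simp only [add_sub_cancel] at h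
  rw [DZ, h]
  refine Finset.sum_congr rfl fun i _ => ?_
  simp [Nat.choose]
  ring

lemma DZ_zero_left (p : ℕ) (hp : 1 ≤ p) : DZ k t 0 p = 0 := by
  simp [DZ, Nat.choose_eq_zero_of_lt (show p - 1 < p by omega)]

lemma DZ_rec (m p : ℕ) :
    DZ k t (m+1) (p+1)
      = k * DZ k t m (p+1) + DZ k t (m+1) p - ((k:ℤ) - t) * DZ k t m p := by
  have hk : (k:ℤ) = ((k:ℤ) - t) + t := by ring
  -- goal rearranged: A + (K-T)*E = (K-T)*B + T*B + C
  have main : DZ k t (m+1) (p+1) + ((k:ℤ) - t) * DZ k t m p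
      = ((k:ℤ) - t) * DZ k t m (p+1) + (t:ℤ) * DZ k t m (p+1) + DZ k t (m+1) p := by
    have hE : ((k:ℤ) - t) * DZ k t m p
        = ∑ i ∈ range (m+2),
            (m.choose i : ℤ) * ((i + p - 1).choose p : ℤ) * ((k:ℤ) - t) ^ (m + 1 - i) * (t:ℤ) ^ i := by
      rw [DZ, Finset.mul_sum, Finset.sum_range_succ (n := m+1)]
      rw [Nat.choose_succ_self]
      push_cast
      simp only [zero_mul, add_zero]
      refine Finset.sum_congr rfl fun i hi => ?_
      have : m + 1 - i = (m - i) + 1 := by simp at hi; omega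
      rw [this]; ring
    have hB : ((k:ℤ) - t) * DZ k t m (p+1)
        = ∑ i ∈ range (m+2),
            (m.choose i : ℤ) * ((i + p).choose (p+1) : ℤ) * ((k:ℤ) - t) ^ (m + 1 - i) * (t:ℤ) ^ i := by
      rw [DZ, Finset.mul_sum, Finset.sum_range_succ (n := m+1)]
      rw [Nat.choose_succ_self]
      push_cast
      simp only [zero_mul, add_zero]
      refine Finset.sum_congr rfl fun i hi => ?_
      have h1 : i + (p+1) - 1 = i + p := by omega
      have h2 : m + 1 - i = (m - i) + 1 := by simp at hi; omega
      rw [h1, h2]; ring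
    have hTB : (t:ℤ) * DZ k t m (p+1)
        = ∑ i ∈ range (m+2),
            (if i = 0 then 0 else
              (m.choose (i-1) : ℤ) * ((i - 1 + p).choose (p+1) : ℤ)
                * ((k:ℤ) - t) ^ (m + 1 - i) * (t:ℤ) ^ i) := by
      rw [Finset.sum_range_succ' (n := m+1), if_pos rfl, add_zero]
      rw [DZ, Finset.mul_sum]
      refine Finset.sum_congr rfl fun i hi => ?_
      rw [if_neg (Nat.succ_ne_zero i)]
      have h1 : i + (p+1) - 1 = i + p := by omega
      have h2 : i + 1 - 1 = i := by omega
      have h3 : m + 1 - (i + 1) = m - i := by omega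
      rw [h1, h2, h3]; ring
    have hA : DZ k t (m+1) (p+1)
        = ∑ i ∈ range (m+2),
            ((m+1).choose i : ℤ) * ((i + p).choose (p+1) : ℤ) * ((k:ℤ) - t) ^ (m + 1 - i) * (t:ℤ) ^ i := by
      rw [DZ]
      refine Finset.sum_congr rfl fun i _ => ?_
      have h1 : i + (p+1) - 1 = i + p := by omega
      rw [h1]
    have hC : DZ k t (m+1) p
        = ∑ i ∈ range (m+2),
            ((m+1).choose i : ℤ) * ((i + p - 1).choose p : ℤ) * ((k:ℤ) - t) ^ (m + 1 - i) * (t:ℤ) ^ i := rfl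
    rw [hA, hE, hB, hTB, hC, ← Finset.sum_add_distrib, ← Finset.sum_add_distrib,
      ← Finset.sum_add_distrib]
    refine Finset.sum_congr rfl fun i _ => ?_
    rcases i with _ | j
    · rcases p with _ | q
      · simp [Nat.choose]
      · simp [Nat.choose_eq_zero_of_lt (show q + 1 - 1 < q + 1 by omega),
          Nat.choose_eq_zero_of_lt (show q + 1 < q + 2 by omega)]
    · rw [if_neg (Nat.succ_ne_zero j)]
      have e1 : j + 1 + p - 1 = j + p := by omega
      have e2 : j + 1 - 1 = j := by omega
      rw [e1, e2]
      have p1 : ((m+1).choose (j+1) : ℤ) = (m.choose j : ℤ) + (m.choose (j+1) : ℤ) := by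
        exact_mod_cast congrArg (Nat.cast : ℕ → ℤ) (Nat.choose_succ_succ m j)
      have p2 : ((j + 1 + p).choose (p+1) : ℤ)
          = ((j + p).choose p : ℤ) + ((j + p).choose (p+1) : ℤ) := by
        have h : j + 1 + p = (j + p) + 1 := by omega
        rw [h]
        exact_mod_cast congrArg (Nat.cast : ℕ → ℤ) (Nat.choose_succ_succ (j+p) p)
      rw [p1, p2]
      ring
  linarith [main]

def RZ (n s : ℕ) : ℤ :=
  ∑ p ∈ range (n+1), (-1:ℤ)^(p+s) * (p.choose s : ℤ) * DZ k t (n-p) p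

lemma RZ_zero (s : ℕ) : RZ k t 0 s = if s = 0 then 1 else 0 := by
  rcases s with _ | s
  · simp [RZ, DZ]
  · simp [RZ, DZ, Nat.choose]

lemma RZ_one (s : ℕ) : RZ k t 1 s = if s = 0 then (k:ℤ) else 0 := by
  have h0 := DZ_zero_right k t 1
  have h1 := DZ_zero_left k t 1 le_rfl
  rcases s with _ | s
  · simp [RZ, Finset.sum_range_succ, h0, h1]
  · simp [RZ, Finset.sum_range_succ, h0, h1, Nat.choose]

lemma sum_shift_split (G : ℕ → ℤ) (N s : ℕ) :
    ∑ p ∈ range N, (-1:ℤ)^(p+1+s) * ((p+1).choose s : ℤ) * G p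
      = (if s = 0 then -(∑ p ∈ range N, (-1:ℤ)^(p+0) * (p.choose 0 : ℤ) * G p)
         else (∑ p ∈ range N, (-1:ℤ)^(p+(s-1)) * (p.choose (s-1) : ℤ) * G p)
              - (∑ p ∈ range N, (-1:ℤ)^(p+s) * (p.choose s : ℤ) * G p)) := by
  rcases s with _ | s
  · rw [if_pos rfl, ← Finset.sum_neg_distrib]
    refine Finset.sum_congr rfl fun p _ => ?_
    have e : (-1:ℤ)^(p+1+0) = -(-1:ℤ)^(p+0) := by
      rw [show p+1+0 = (p+0)+1 by omega, pow_succ]; ring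
    rw [e, Nat.choose_zero_right, Nat.choose_zero_right]
    push_cast; ring
  · rw [if_neg (Nat.succ_ne_zero s), ← Finset.sum_sub_distrib]
    refine Finset.sum_congr rfl fun p _ => ?_
    have c1 : (((p+1).choose (s+1)) : ℤ) = (p.choose s : ℤ) + (p.choose (s+1) : ℤ) := by
      exact_mod_cast congrArg (Nat.cast : ℕ → ℤ) (Nat.choose_succ_succ p s)
    have e1 : (-1:ℤ)^(p+1+(s+1)) = (-1:ℤ)^(p+s) := by
      rw [show p+1+(s+1) = (p+s)+2 by omega, pow_add]; norm_num
    have e2 : (-1:ℤ)^(p+(s+1)) = -(-1:ℤ)^(p+s) := by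
      rw [show p+(s+1) = (p+s)+1 by omega, pow_succ]; ring
    rw [c1, e1, e2]
    have e3 : p + 1 - 1 = p := by omega
    rw [show s + 1 - 1 = s by omega]
    ring

lemma RZ_rec (n s : ℕ) :
    RZ k t (n+2) s
      = ((k:ℤ) - 1) * RZ k t (n+1) s + ((k:ℤ) - t) * RZ k t n s
        + (if s = 0 then 0 else RZ k t (n+1) (s-1) - ((k:ℤ) - t) * RZ k t n (s-1)) := by
  have expand : RZ k t (n+2) s
      = (-1:ℤ)^(0+s) * ((Nat.choose 0 s : ℕ) : ℤ) * (k:ℤ)^(n+2)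
        + ∑ p ∈ range (n+2), (-1:ℤ)^(p+1+s) * ((p+1).choose s : ℤ) *
            ((k:ℤ) * DZ k t (n-p) (p+1) + DZ k t (n+1-p) p - ((k:ℤ)-t) * DZ k t (n-p) p) := by
    rw [RZ, Finset.sum_range_succ' _ (n+2)]
    rw [Nat.sub_zero, DZ_zero_right]
    rw [add_comm]
    congr 1
    refine Finset.sum_congr rfl fun p hp => ?_
    simp only [Nat.succ_sub_succ]
    congr 1
    rcases Nat.lt_or_ge p (n+1) with h | h
    · have : n + 1 - p = (n - p) + 1 := by omega
      rw [this, DZ_rec]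
    · have hp' : p = n + 1 := by simp at hp; omega
      subst hp'
      simp only [Nat.sub_self, show n - (n+1) = 0 by omega]
      rw [DZ_zero_left k t (n+2) (by omega), DZ_zero_left k t (n+1) (by omega)]
      ring
  -- split the big sum
  have split : ∑ p ∈ range (n+2), (-1:ℤ)^(p+1+s) * ((p+1).choose s : ℤ) *
            ((k:ℤ) * DZ k t (n-p) (p+1) + DZ k t (n+1-p) p - ((k:ℤ)-t) * DZ k t (n-p) p)
      = (k:ℤ) * (∑ p ∈ range (n+2), (-1:ℤ)^(p+1+s) * ((p+1).choose s : ℤ) * DZ k t (n-p) (p+1))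
        + (∑ p ∈ range (n+2), (-1:ℤ)^(p+1+s) * ((p+1).choose s : ℤ) * DZ k t (n+1-p) p)
        - ((k:ℤ)-t) * (∑ p ∈ range (n+2), (-1:ℤ)^(p+1+s) * ((p+1).choose s : ℤ) * DZ k t (n-p) p) := by
    rw [Finset.mul_sum, Finset.mul_sum, ← Finset.sum_add_distrib, ← Finset.sum_sub_distrib]
    refine Finset.sum_congr rfl fun p _ => ?_
    ring
  -- S1
  have hS1 : ∑ p ∈ range (n+2), (-1:ℤ)^(p+1+s) * ((p+1).choose s : ℤ) * DZ k t (n-p) (p+1)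
      = RZ k t (n+1) s - (-1:ℤ)^(0+s) * ((Nat.choose 0 s : ℕ) : ℤ) * (k:ℤ)^(n+1) := by
    rw [Finset.sum_range_succ]
    rw [show n - (n+1) = 0 by omega, DZ_zero_left k t (n+2) (by omega), mul_zero, add_zero]
    have : RZ k t (n+1) s
        = (∑ p ∈ range (n+1), (-1:ℤ)^(p+1+s) * ((p+1).choose s : ℤ) * DZ k t (n-p) (p+1))
          + (-1:ℤ)^(0+s) * ((Nat.choose 0 s : ℕ) : ℤ) * (k:ℤ)^(n+1) := by
      rw [RZ, Finset.sum_range_succ' _ (n+1)]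
      rw [Nat.sub_zero, DZ_zero_right]
      congr 1
      refine Finset.sum_congr rfl fun p _ => ?_
      simp only [Nat.succ_sub_succ]
    rw [this]; ring
  -- S3 range trim
  have hS3 : ∑ p ∈ range (n+2), (-1:ℤ)^(p+1+s) * ((p+1).choose s : ℤ) * DZ k t (n-p) p
      = ∑ p ∈ range (n+1), (-1:ℤ)^(p+1+s) * ((p+1).choose s : ℤ) * DZ k t (n-p) p := by
    rw [Finset.sum_range_succ, show n - (n+1) = 0 by omega,
      DZ_zero_left k t (n+1) (by omega), mul_zero, add_zero]
  have key2 := sum_shift_split (fun p => DZ k t (n+1-p) p) (n+2) s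
  have key3 := sum_shift_split (fun p => DZ k t (n-p) p) (n+1) s
  rcases s with _ | s
  · rw [if_pos rfl] at key2 key3
    rw [if_pos rfl]
    rw [expand, split, hS1, hS3, key2, key3]
    have r1 : RZ k t (n+1) 0 = ∑ p ∈ range (n+2), (-1:ℤ)^(p+0) * (p.choose 0 : ℤ) * DZ k t (n+1-p) p := rfl
    have r2 : RZ k t n 0 = ∑ p ∈ range (n+1), (-1:ℤ)^(p+0) * (p.choose 0 : ℤ) * DZ k t (n-p) p := rfl
    rw [← r1, ← r2]
    ring
  · rw [if_neg (Nat.succ_ne_zero s)] at key2 key3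
    rw [if_neg (Nat.succ_ne_zero s)]
    rw [expand, split, hS1, hS3, key2, key3]
    have r1 : RZ k t (n+1) (s+1) = ∑ p ∈ range (n+2), (-1:ℤ)^(p+(s+1)) * (p.choose (s+1) : ℤ) * DZ k t (n+1-p) p := rfl
    have r1' : RZ k t (n+1) s = ∑ p ∈ range (n+2), (-1:ℤ)^(p+s) * (p.choose s : ℤ) * DZ k t (n+1-p) p := rfl
    have r2 : RZ k t n (s+1) = ∑ p ∈ range (n+1), (-1:ℤ)^(p+(s+1)) * (p.choose (s+1) : ℤ) * DZ k t (n-p) p := rfl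
    have r2' : RZ k t n s = ∑ p ∈ range (n+1), (-1:ℤ)^(p+s) * (p.choose s : ℤ) * DZ k t (n-p) p := rfl
    rw [show s + 1 - 1 = s by omega] at key2 key3 ⊢
    rw [← r1, ← r1', ← r2, ← r2']
    ring

lemma main (ht : t ≤ k) : ∀ n : ℕ, ∀ s : ℕ, (Nc k t n s : ℤ) = RZ k t n s := by
  intro n
  induction n using Nat.strong_induction_on with
  | _ n ih =>
    rcases n with _ | n
    · intro s
      rw [Nc_zero, RZ_zero]
      split_ifs <;> simp
    · rcases n with _ | n
      · intro s
        rw [Nc_one, RZ_one]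
        split_ifs <;> simp
      · intro s
        have ih1 := ih (n+1) (by omega)
        have ih0 := ih n (by omega)
        rw [NR k t ht n s, RZ_rec k t n s, ih1 s, ih0 s]
        rcases s with _ | s
        · rw [if_pos rfl, if_pos rfl]
        · rw [if_neg (Nat.succ_ne_zero s), if_neg (Nat.succ_ne_zero s)]
          simp only [Nat.succ_sub_one]
          rw [ih1 s, ih0 s]

end LevAux

theorem stmt_0 (k n t s : ℕ) (ht : t ≤ k) :
    ((Finset.univ.filter (fun w : Fin n → Fin k =>
        levCount (fun x => 1 ≤ x ∧ x ≤ t) w = s)).card : ℤ)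
      = ∑ m ∈ Finset.range (n + 1), ∑ i ∈ Finset.range (m + 1),
          (-1 : ℤ) ^ (n + m + s) *
            ((m.choose i * (i + n - m - 1).choose (n - m) * (n - m).choose s
              * (k - t) ^ (m - i) * t ^ i : ℕ) : ℤ) := by
  classical
  have hl : (Finset.univ.filter (fun w : Fin n → Fin k =>
      levCount (fun x => 1 ≤ x ∧ x ≤ t) w = s)).card = LevAux.Nc k t n s := by
    congr 1
    apply Finset.filter_congr
    intro w _
    have hlev : levCount (fun x => 1 ≤ x ∧ x ≤ t) w = LevAux.lev k t w := by
      unfold levCount LevAux.lev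
      congr 1
      apply Finset.filter_congr
      intro p _
      constructor
      · rintro ⟨h1, h2, h3⟩
        exact ⟨h1, h2, by omega⟩
      · rintro ⟨h1, h2, h3⟩
        exact ⟨h1, h2, by omega⟩
    rw [hlev]
  rw [hl, LevAux.main k t ht n s]
  have hkt : ((k - t : ℕ) : ℤ) = (k:ℤ) - t := Nat.cast_sub ht
  rw [LevAux.RZ]
  rw [← Finset.sum_range_reflect (fun m => ∑ i ∈ Finset.range (m + 1),
      (-1 : ℤ) ^ (n + m + s) *
        ((m.choose i * (i + n - m - 1).choose (n - m) * (n - m).choose s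
          * (k - t) ^ (m - i) * t ^ i : ℕ) : ℤ)) (n+1)]
  refine Finset.sum_congr rfl fun p hp => ?_
  have hpn : p ≤ n := by
    simp only [Finset.mem_range] at hp
    omega
  have hidx : n + 1 - 1 - p = n - p := by omega
  rw [hidx]
  rw [LevAux.DZ, Finset.mul_sum]
  refine Finset.sum_congr rfl fun i hi => ?_
  have him : i ≤ n - p := by
    simp only [Finset.mem_range] at hi
    omega
  have h1 : n - (n - p) = p := by omega
  have h2 : i + n - (n - p) - 1 = i + p - 1 := by omega
  have hsign : (-1 : ℤ) ^ (n + (n - p) + s) = (-1 : ℤ) ^ (p + s) := by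
    have he : n + (n - p) + s = (p + s) + 2 * (n - p) := by omega
    rw [he, pow_add, pow_mul, neg_one_sq, one_pow, mul_one]
  rw [h1, h2, hsign]
  push_cast [hkt]
  ring
end

section
/- Let k ≥ 1 and n, s ≥ 0. The number of words w ∈ [k]^n such that des_{{k}}(w) = s (descents whose first element equals k) is Σ_{r=s}^{n−s} (k−1)^{r} · C(r, s) · C(n−r, s). -/
open Finset

/-- The number of descents of the word `w : Fin n → Fin k` (encoding a word over the
alphabet `[k] = {1,…,k}`, position `p` carrying the letter `(w p : ℕ) + 1`) whose
first element satisfies `X`. -/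
def descCount (X : ℕ → Prop) [DecidablePred X] {k n : ℕ} (w : Fin n → Fin k) : ℕ :=
  (Finset.univ.filter (fun p : Fin n × Fin n =>
    (p.1 : ℕ) + 1 = (p.2 : ℕ) ∧ (w p.2 : ℕ) < (w p.1 : ℕ) ∧ X ((w p.1 : ℕ) + 1))).card

def ext' {k n : ℕ} (w : Fin n → Fin k) (i : ℕ) : ℕ :=
  if h : i < n then ((w ⟨i, h⟩ : ℕ) + 1) else 0

lemma descCount_eq_sum (X : ℕ → Prop) [DecidablePred X] {k n : ℕ} (w : Fin n → Fin k) :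
    descCount X w
      = ∑ i ∈ Finset.range (n - 1),
          (if ext' w (i+1) < ext' w i ∧ X (ext' w i) then 1 else 0) := by
  rw [← Finset.card_filter]
  unfold descCount
  apply Finset.card_bij (i := fun p _ => ((p.1 : Fin n) : ℕ))
  · intro p hp
    simp only [Finset.mem_filter, Finset.mem_univ, true_and] at hp
    obtain ⟨h1, h2, h3⟩ := hp
    have hp2 : (p.2 : ℕ) < n := p.2.isLt
    have hp1 : (p.1 : ℕ) < n := p.1.isLt
    simp only [Finset.mem_filter, Finset.mem_range]
    have hlt : (p.1 : ℕ) < n - 1 := by omega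
    refine ⟨hlt, ?_⟩
    have e1 : ext' w ((p.1:ℕ)) = (w p.1 : ℕ) + 1 := by
      simp [ext', hp1]
    have hh : (p.1:ℕ)+1 < n := by omega
    have e2 : ext' w ((p.1:ℕ)+1) = (w p.2 : ℕ) + 1 := by
      have hq : (⟨(p.1:ℕ)+1, hh⟩ : Fin n) = p.2 := Fin.ext h1
      simp [ext', hh, hq]
    rw [e1, e2]
    exact ⟨by omega, h3⟩
  · intro p hp q hq hpq
    simp only [Finset.mem_filter, Finset.mem_univ, true_and] at hp hq
    have h1 : p.1 = q.1 := Fin.ext hpq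
    have h2 : p.2 = q.2 := by
      apply Fin.ext
      have := hp.1; have := hq.1
      omega
    exact Prod.ext h1 h2
  · intro i hi
    simp only [Finset.mem_filter, Finset.mem_range] at hi
    obtain ⟨hilt, hcond⟩ := hi
    have h1 : i < n := by omega
    have h2 : i + 1 < n := by omega
    refine ⟨(⟨i, h1⟩, ⟨i+1, h2⟩), ?_, rfl⟩
    simp only [Finset.mem_filter, Finset.mem_univ, true_and]
    have e1 : ext' w i = (w ⟨i, h1⟩ : ℕ) + 1 := by simp [ext', h1]
    have e2 : ext' w (i+1) = (w ⟨i+1, h2⟩ : ℕ) + 1 := by simp [ext', h2]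
    rw [e1, e2] at hcond
    refine ⟨?_, hcond.2⟩
    have := hcond.1
    omega

lemma ext'_cons_zero {k n : ℕ} (a : Fin k) (w : Fin n → Fin k) :
    ext' (Fin.cons a w) 0 = (a : ℕ) + 1 := by
  simp [ext']

lemma ext'_cons_succ {k n : ℕ} (a : Fin k) (w : Fin n → Fin k) (i : ℕ) :
    ext' (Fin.cons a w) (i + 1) = ext' w i := by
  unfold ext'
  by_cases h : i < n
  · have h' : i + 1 < n + 1 := by omega
    rw [dif_pos h', dif_pos h]
    have : (⟨i + 1, h'⟩ : Fin (n+1)) = Fin.succ ⟨i, h⟩ := rfl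
    rw [this, Fin.cons_succ]
  · rw [dif_neg (by omega), dif_neg h]

lemma descCount_cons (X : ℕ → Prop) [DecidablePred X] {k n : ℕ} (a : Fin k)
    (w : Fin n → Fin k) :
    descCount X (Fin.cons a w)
      = descCount X w
        + (if 0 < n ∧ ext' w 0 < (a : ℕ) + 1 ∧ X ((a : ℕ) + 1) then 1 else 0) := by
  rw [descCount_eq_sum, descCount_eq_sum]
  cases n with
  | zero => simp
  | succ m =>
    simp only [Nat.add_sub_cancel]
    rw [Finset.sum_range_succ']
    have hterm : ∀ i, (if ext' (Fin.cons a w) (i+1+1) < ext' (Fin.cons a w) (i+1)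
          ∧ X (ext' (Fin.cons a w) (i+1)) then 1 else 0)
        = (if ext' w (i+1) < ext' w i ∧ X (ext' w i) then 1 else 0) := by
      intro i
      rw [ext'_cons_succ, ext'_cons_succ]
    rw [Finset.sum_congr rfl (fun i _ => hterm i)]
    congr 1
    rw [ext'_cons_succ, ext'_cons_zero]
    have : (0 < m + 1 ∧ ext' w 0 < (a:ℕ)+1 ∧ X ((a:ℕ)+1)) ↔ (ext' w 0 < (a:ℕ)+1 ∧ X ((a:ℕ)+1)) := by
      simp
    simp only [this]

def tt (k n s : ℕ) : ℕ := ∑ r ∈ range (n+1), (k-1)^r * r.choose s * (n-r).choose s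
def uu (k n s : ℕ) : ℕ := ∑ r ∈ range (n+1), (k-1)^r * r.choose (s+1) * (n-r).choose s

lemma U1 (k n s : ℕ) : tt k (n+1) (s+1) = tt k n (s+1) + uu k n s := by
  unfold tt uu
  rw [Finset.sum_range_succ]
  have hlast : (k-1)^(n+1) * (n+1).choose (s+1) * ((n+1)-(n+1)).choose (s+1) = 0 := by
    simp [Nat.choose_eq_zero_of_lt]
  rw [hlast, add_zero, ← Finset.sum_add_distrib]
  apply Finset.sum_congr rfl
  intro r hr
  have hr' : r ≤ n := by have := mem_range.mp hr; omega
  have h1 : n + 1 - r = (n - r) + 1 := by omega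
  rw [h1, Nat.choose_succ_succ]
  ring

lemma U2 (k n s : ℕ) : uu k (n+1) s = (k-1) * (uu k n s + tt k n s) := by
  unfold uu tt
  rw [Finset.sum_range_succ']
  have h0 : (k-1)^0 * Nat.choose 0 (s+1) * ((n+1)-0).choose s = 0 := by
    simp
  rw [h0, add_zero, mul_add, Finset.mul_sum, Finset.mul_sum, ← Finset.sum_add_distrib]
  apply Finset.sum_congr rfl
  intro r hr
  have hr' : r ≤ n := by have := mem_range.mp hr; omega
  have h1 : n + 1 - (r + 1) = n - r := by omega
  rw [h1, Nat.choose_succ_succ, pow_succ]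
  ring

lemma N1 (k : ℕ) (hk : 1 ≤ k) (n s : ℕ) :
    tt k (n+2) (s+1) + (k-1) * tt k n (s+1)
      = k * tt k (n+1) (s+1) + (k-1) * tt k n s := by
  obtain ⟨x, rfl⟩ : ∃ x, k = x + 1 := ⟨k - 1, by omega⟩
  have e1 := U1 (x+1) n s
  have e2 := U1 (x+1) (n+1) s
  have e3 := U2 (x+1) n s
  simp only [Nat.add_sub_cancel] at e1 e2 e3 ⊢
  rw [e2, e3, e1]
  ring

lemma N0 (k : ℕ) (hk : 1 ≤ k) (n : ℕ) :
    tt k (n+2) 0 + (k-1) * tt k n 0 = k * tt k (n+1) 0 := by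
  obtain ⟨x, rfl⟩ : ∃ x, k = x + 1 := ⟨k - 1, by omega⟩
  simp only [tt, Nat.choose_zero_right, mul_one, Nat.add_sub_cancel]
  have g1 : ∑ r ∈ range (n+2+1), x^r = ∑ r ∈ range (n+1+1), x^r + x^(n+2) :=
    Finset.sum_range_succ _ _
  have g2 : ∑ r ∈ range (n+1+1), x^r = ∑ r ∈ range (n+1), x^r + x^(n+1) :=
    Finset.sum_range_succ _ _
  rw [g1, g2]
  ring

lemma tt_zero (k s : ℕ) : tt k 0 s = if s = 0 then 1 else 0 := by
  rcases s with _ | s <;> simp [tt]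

lemma tt_one (k : ℕ) (hk : 1 ≤ k) (s : ℕ) : tt k 1 s = if s = 0 then k else 0 := by
  rcases s with _ | s
  · simp [tt, Finset.sum_range_succ]
    omega
  · simp [tt, Finset.sum_range_succ, Nat.choose_eq_zero_of_lt]

lemma sum_Icc_eq_tt (k n s : ℕ) :
    ∑ r ∈ Finset.Icc s (n - s), (k - 1) ^ r * r.choose s * (n - r).choose s = tt k n s := by
  unfold tt
  apply Finset.sum_subset
  · intro x hx
    simp only [mem_Icc] at hx
    simp only [mem_range]
    omega
  · intro x hx hnx
    simp only [mem_range] at hx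
    simp only [mem_Icc, not_and, not_le] at hnx
    by_cases hxs : x < s
    · simp [Nat.choose_eq_zero_of_lt hxs]
    · have h1 : n - x < s := by
        have := hnx (by omega)
        omega
      simp [Nat.choose_eq_zero_of_lt h1]

lemma card_filter_equiv {α β : Type*} [Fintype α] [Fintype β] (e : α ≃ β)
    (p : β → Prop) [DecidablePred p] :
    (univ.filter (fun a => p (e a))).card = (univ.filter p).card := by
  apply Finset.card_bij (i := fun a _ => e a)
  · intro a ha; simp_all
  · intro a _ b _ h; exact e.injective h
  · intro b hb; exact ⟨e.symm b, by simp_all, by simp⟩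

lemma card_filter_prod {α β : Type*} [Fintype α] [Fintype β] (P : α × β → Prop)
    [DecidablePred P] :
    (univ.filter P).card = ∑ a : α, (univ.filter (fun b => P (a, b))).card := by
  rw [Finset.card_filter, Fintype.sum_prod_type]
  exact Finset.sum_congr rfl (fun a _ => (Finset.card_filter _ _).symm)

def Tc (k n s : ℕ) : ℕ :=
  (univ.filter (fun w : Fin n → Fin k => descCount (fun x => x = k) w = s)).card

def Fc (k n s : ℕ) : ℕ :=
  (univ.filter (fun w : Fin n → Fin k =>
    descCount (fun x => x = k) w + (if 0 < n ∧ ext' w 0 < k then 1 else 0) = s)).card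

def Bcc (k n s : ℕ) : ℕ :=
  (univ.filter (fun w : Fin n → Fin k =>
    descCount (fun x => x = k) w = s ∧ ext' w 0 < k)).card

lemma Tc_succ (k : ℕ) (hk : 1 ≤ k) (n s : ℕ) :
    Tc k (n+1) s = (k-1) * Tc k n s + Fc k n s := by
  unfold Tc Fc
  rw [← card_filter_equiv (Fin.consEquiv (fun _ => Fin k)), card_filter_prod]
  have he : ∀ (a : Fin k) (w : Fin n → Fin k),
      (Fin.consEquiv (fun _ => Fin k)) (a, w) = Fin.cons a w := fun _ _ => rfl
  simp only [he, descCount_cons]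
  have htop : (⟨k-1, by omega⟩ : Fin k) ∈ (univ : Finset (Fin k)) := mem_univ _
  rw [Finset.sum_eq_sum_sdiff_singleton_add htop]
  congr 1
  · have hconst : ∀ a ∈ (univ : Finset (Fin k)) \ {(⟨k-1, by omega⟩ : Fin k)},
        (univ.filter (fun w : Fin n → Fin k =>
          descCount (fun x => x = k) w
            + (if 0 < n ∧ ext' w 0 < (a:ℕ)+1 ∧ ((a:ℕ)+1 = k) then 1 else 0) = s)).card
          = Tc k n s := by
      intro a ha
      have h1 : (a:ℕ) < k := a.isLt
      have h2 : (a:ℕ) + 1 ≠ k := by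
        simp only [mem_sdiff, mem_singleton, Fin.ext_iff] at ha
        have := ha.2
        omega
      simp [h2, Tc]
    rw [Finset.sum_congr rfl hconst, Finset.sum_const, smul_eq_mul,
      Finset.card_sdiff_of_subset (by simp), card_univ, Fintype.card_fin, Finset.card_singleton]
    rfl
  · have h3 : ((⟨k-1, by omega⟩ : Fin k) : ℕ) + 1 = k := by
      show k - 1 + 1 = k
      omega
    congr 1
    apply Finset.filter_congr
    intro w _
    simp [h3]

lemma Bcc_succ (k : ℕ) (hk : 1 ≤ k) (n s : ℕ) :
    Bcc k (n+1) s = (k-1) * Tc k n s := by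
  unfold Bcc Tc
  rw [← card_filter_equiv (Fin.consEquiv (fun _ => Fin k)), card_filter_prod]
  have he : ∀ (a : Fin k) (w : Fin n → Fin k),
      (Fin.consEquiv (fun _ => Fin k)) (a, w) = Fin.cons a w := fun _ _ => rfl
  simp only [he, descCount_cons, ext'_cons_zero]
  rw [← Finset.sum_filter_add_sum_filter_not univ (fun a : Fin k => (a:ℕ)+1 < k)]
  have h2 : ∑ a ∈ univ.filter (fun a : Fin k => ¬((a:ℕ)+1 < k)),
      (univ.filter (fun w : Fin n → Fin k =>
        (descCount (fun x => x = k) w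
          + (if 0 < n ∧ ext' w 0 < (a:ℕ)+1 ∧ ((a:ℕ)+1 = k) then 1 else 0) = s)
        ∧ (a:ℕ)+1 < k)).card = 0 := by
    apply Finset.sum_eq_zero
    intro a ha
    simp only [mem_filter] at ha
    have := ha.2
    simp [this]
  rw [h2, add_zero]
  have h1 : ∀ a ∈ univ.filter (fun a : Fin k => (a:ℕ)+1 < k),
      (univ.filter (fun w : Fin n → Fin k =>
        (descCount (fun x => x = k) w
          + (if 0 < n ∧ ext' w 0 < (a:ℕ)+1 ∧ ((a:ℕ)+1 = k) then 1 else 0) = s)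
        ∧ (a:ℕ)+1 < k)).card
      = (univ.filter (fun w : Fin n → Fin k => descCount (fun x => x = k) w = s)).card := by
    intro a ha
    simp only [mem_filter] at ha
    have hlt := ha.2
    have hne : ¬((a:ℕ)+1 = k) := by omega
    congr 1
    apply Finset.filter_congr
    intro w _
    simp [hne, hlt]
  rw [Finset.sum_congr rfl h1, Finset.sum_const, smul_eq_mul]
  congr 1
  have : (univ.filter (fun a : Fin k => (a:ℕ)+1 < k))
      = univ \ {(⟨k-1, by omega⟩ : Fin k)} := by
    have hval : ((⟨k-1, by omega⟩ : Fin k) : ℕ) = k - 1 := rfl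
    ext a
    have ha := a.isLt
    simp only [mem_filter, mem_univ, true_and, mem_sdiff, mem_singleton, Fin.ext_iff, hval]
    omega
  rw [this, Finset.card_sdiff_of_subset (by simp), card_univ, Fintype.card_fin, Finset.card_singleton]

lemma Fc_split (k n s : ℕ) :
    Fc k (n+1) s + Bcc k (n+1) s
      = Tc k (n+1) s + (if s = 0 then 0 else Bcc k (n+1) (s-1)) := by
  unfold Fc Bcc Tc
  rcases s with _ | s
  · simp only [if_pos rfl, add_zero]
    rw [Finset.card_filter, Finset.card_filter, Finset.card_filter,
      ← Finset.sum_add_distrib]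
    apply Finset.sum_congr rfl
    intro w _
    by_cases hc : ext' w 0 < k <;> simp [hc] <;> split_ifs <;> omega
  · have hs' : (s + 1 : ℕ) ≠ 0 := by omega
    rw [if_neg hs']
    simp only [Nat.add_sub_cancel]
    rw [Finset.card_filter, Finset.card_filter, Finset.card_filter, Finset.card_filter,
      ← Finset.sum_add_distrib, ← Finset.sum_add_distrib]
    apply Finset.sum_congr rfl
    intro w _
    by_cases hc : ext' w 0 < k <;> simp [hc] <;> split_ifs <;> omega

lemma Tc_rec (k : ℕ) (hk : 1 ≤ k) (n s : ℕ) :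
    Tc k (n+2) s + (k-1) * Tc k n s
      = k * Tc k (n+1) s + (if s = 0 then 0 else (k-1) * Tc k n (s-1)) := by
  have h1 := Tc_succ k hk (n+1) s
  have h2 := Fc_split k n s
  have h3 := Bcc_succ k hk n s
  have h4 := Bcc_succ k hk n (s-1)
  have hx : ∀ X Y : ℕ, (k-1) * X + (X + Y) = k * X + Y := by
    intro X Y
    have hk2 : k - 1 + 1 = k := by omega
    calc (k-1) * X + (X + Y) = ((k-1)+1) * X + Y := by ring
    _ = k * X + Y := by rw [hk2]
  rw [h1, ← h3, add_assoc, h2]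
  rcases Nat.eq_zero_or_pos s with hs | hs
  · subst hs
    simp only [if_pos rfl]
    rw [hx]
    simp
  · have hs' : s ≠ 0 := by omega
    rw [if_neg hs', if_neg hs', h4, hx]


lemma descCount_small (X : ℕ → Prop) [DecidablePred X] {k n : ℕ} (w : Fin n → Fin k)
    (hn : n ≤ 1) : descCount X w = 0 := by
  rw [descCount_eq_sum]
  have : n - 1 = 0 := by omega
  rw [this]
  simp

lemma Tc_zero (k s : ℕ) : Tc k 0 s = if s = 0 then 1 else 0 := by
  unfold Tc
  have h : ∀ w : Fin 0 → Fin k, descCount (fun x => x = k) w = 0 :=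
    fun w => descCount_small _ w (by omega)
  rcases s with _ | s
  · rw [Finset.filter_true_of_mem (fun w _ => h w)]
    simp
  · rw [Finset.filter_false_of_mem (fun w _ => by rw [h w]; omega)]
    simp

lemma Tc_one (k s : ℕ) : Tc k 1 s = if s = 0 then k else 0 := by
  unfold Tc
  have h : ∀ w : Fin 1 → Fin k, descCount (fun x => x = k) w = 0 :=
    fun w => descCount_small _ w (by omega)
  rcases s with _ | s
  · rw [Finset.filter_true_of_mem (fun w _ => h w)]
    simp
  · rw [Finset.filter_false_of_mem (fun w _ => by rw [h w]; omega)]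
    simp

lemma Tc_eq_tt (k : ℕ) (hk : 1 ≤ k) : ∀ n s, Tc k n s = tt k n s := by
  intro n
  induction n using Nat.strong_induction_on with
  | _ n ih =>
    match n with
    | 0 =>
      intro s
      rw [Tc_zero, tt_zero]
    | 1 =>
      intro s
      rw [Tc_one, tt_one k hk]
    | (m+2) =>
      intro s
      have h1 := ih m (by omega)
      have h2 := ih (m+1) (by omega)
      have hrec := Tc_rec k hk m s
      simp only [h1, h2] at hrec
      have hnum : tt k (m+2) s + (k-1) * tt k m s
          = k * tt k (m+1) s + (if s = 0 then 0 else (k-1) * tt k m (s-1)) := by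
        rcases s with _ | s
        · simp only [if_pos rfl, add_zero]
          exact N0 k hk m
        · rw [if_neg (by omega)]
          simp only [Nat.add_sub_cancel]
          exact N1 k hk m s
      have hfin : Tc k (m+2) s + (k-1) * tt k m s = tt k (m+2) s + (k-1) * tt k m s := by
        rw [hrec, hnum]
      exact Nat.add_right_cancel hfin

theorem stmt_5 (k n s : ℕ) (hk : 1 ≤ k) :
    (Finset.univ.filter (fun w : Fin n → Fin k =>
        descCount (fun x => x = k) w = s)).card
      = ∑ r ∈ Finset.Icc s (n - s), (k - 1) ^ r * r.choose s * (n - r).choose s := by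
  rw [sum_Icc_eq_tt]
  exact Tc_eq_tt k hk n s
end

section
/- For all natural numbers n, r, s with s ≤ r ≤ n−s, the binomial identity C(r,s) · C(n−r,s) = Σ_{m=r}^{n−s} Σ_{a=r}^{m} (−1)^{n−a−s} C(m,a) · C(a,r) · C(a,n−r) · C(n−m,s) holds. -/
open Finset

lemma shift_sum {M j : ℕ} (hj : j ≤ M) (f : ℕ → ℤ) (h0 : ∀ b < j, f b = 0) :
    ∑ b ∈ range (M+1), f b = ∑ c ∈ range (M - j + 1), f (j + c) := by
  have h1 : ∑ b ∈ Finset.Ico 0 j, f b = 0 := Finset.sum_eq_zero (fun b hb => h0 b (mem_Ico.mp hb).2)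
  have h2 := Finset.sum_Ico_consecutive f (Nat.zero_le j) (by omega : j ≤ M + 1)
  rw [range_eq_Ico, ← h2, h1, zero_add, Finset.sum_Ico_eq_sum_range,
    show M + 1 - j = M - j + 1 from by omega, range_eq_Ico]

lemma alt_trunc (K L : ℕ) (h : K ≤ L) :
    ∑ u ∈ range (L+1), (-1:ℤ)^u * (K.choose u : ℤ) = if K = 0 then 1 else 0 := by
  rw [← Int.alternating_sum_range_choose]
  symm
  apply Finset.sum_subset
  · intro x hx; simp only [mem_range] at *; omega
  · intro x _ hx
    simp only [mem_range, not_lt] at hx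
    rw [Nat.choose_eq_zero_of_lt (by omega)]
    simp

lemma orth (M j : ℕ) :
    ∑ b ∈ range (M+1), (-1:ℤ)^b * ((M.choose b : ℤ) * (b.choose j : ℤ))
      = if j = M then (-1)^M else 0 := by
  by_cases hj : j ≤ M
  · rw [shift_sum hj _ (fun b hb => by rw [Nat.choose_eq_zero_of_lt hb]; ring)]
    have : ∀ c ∈ range (M - j + 1),
        (-1:ℤ)^(j+c) * ((M.choose (j+c) : ℤ) * ((j+c).choose j : ℤ))
          = (-1)^j * (M.choose j : ℤ) * ((-1)^c * ((M-j).choose c : ℤ)) := by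
      intro c hc
      simp only [mem_range] at hc
      have h1 : M.choose (j+c) * (j+c).choose j = M.choose j * (M-j).choose c := by
        have := Nat.choose_mul (n := M) (k := j + c) (s := j) (by omega)
        simpa using this
      have h2 : ((M.choose (j+c) : ℤ) * ((j+c).choose j : ℤ)) = (M.choose j : ℤ) * ((M-j).choose c : ℤ) := by
        exact_mod_cast congrArg (Nat.cast : ℕ → ℤ) h1
      rw [pow_add, h2]; ring
    rw [Finset.sum_congr rfl this, ← Finset.mul_sum,
      alt_trunc (M - j) (M - j) le_rfl]
    by_cases hjM : j = M
    · subst hjM; simp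
    · rw [if_neg (by omega), if_neg hjM]; ring
  · rw [if_neg (by omega)]
    apply Finset.sum_eq_zero
    intro b hb
    simp only [mem_range] at hb
    rw [Nat.choose_eq_zero_of_lt (show b < j by omega)]
    simp

lemma lemA (M r p : ℕ) (h : M ≤ p) :
    ∑ b ∈ range (M+1), (-1:ℤ)^b * ((M.choose b : ℤ) * ((r+b).choose p : ℤ))
      = (-1)^M * (r.choose (p - M) : ℤ) := by
  have expand : ∀ b, ((r+b).choose p : ℤ)
      = ∑ ij ∈ Finset.HasAntidiagonal.antidiagonal p, (r.choose ij.1 : ℤ) * (b.choose ij.2 : ℤ) := by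
    intro b
    rw [Nat.add_choose_eq]
    push_cast
    rfl
  calc ∑ b ∈ range (M+1), (-1:ℤ)^b * ((M.choose b : ℤ) * ((r+b).choose p : ℤ))
      = ∑ b ∈ range (M+1), ∑ ij ∈ Finset.HasAntidiagonal.antidiagonal p,
          (r.choose ij.1 : ℤ) * ((-1)^b * ((M.choose b : ℤ) * (b.choose ij.2 : ℤ))) := by
        apply Finset.sum_congr rfl; intro b _
        rw [expand b, Finset.mul_sum, Finset.mul_sum]
        exact Finset.sum_congr rfl fun ij _ => by ring
    _ = ∑ ij ∈ Finset.HasAntidiagonal.antidiagonal p, (r.choose ij.1 : ℤ) *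
          (∑ b ∈ range (M+1), (-1:ℤ)^b * ((M.choose b : ℤ) * (b.choose ij.2 : ℤ))) := by
        rw [Finset.sum_comm]
        apply Finset.sum_congr rfl; intro ij _
        rw [Finset.mul_sum]
    _ = (-1)^M * (r.choose (p - M) : ℤ) := by
        rw [Finset.sum_congr rfl (fun ij _ => by rw [orth M ij.2])]
        rw [Finset.sum_eq_single_of_mem (p - M, M)
          (by rw [Finset.HasAntidiagonal.mem_antidiagonal]; omega)]
        · show (r.choose (p-M) : ℤ) * (if M = M then ((-1:ℤ))^M else 0) = _
          rw [if_pos rfl]; ring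
        · intro ij hij hne
          rw [Finset.HasAntidiagonal.mem_antidiagonal] at hij
          have hne2 : ij.2 ≠ M := by
            intro hM
            exact hne (Prod.ext (by omega) hM)
          rw [if_neg hne2]; ring
-- tri: C(q,u)C(q-u,j) = C(q,j)C(q-j,u), unconditionally
lemma tri (q u j : ℕ) : q.choose u * (q-u).choose j = q.choose j * (q-j).choose u := by
  by_cases h : u + j ≤ q
  · have h1 : q.choose u = q.choose (q - u) := (Nat.choose_symm (by omega)).symm
    have h2 := Nat.choose_mul (n := q) (k := q - u) (s := j) (by omega)
    have h3 : (q - j).choose (q - u - j) = (q - j).choose u := by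
      rw [show q - u - j = (q - j) - u from by omega]
      exact Nat.choose_symm (by omega)
    rw [h1, h2, h3]
  · rcases Nat.lt_or_ge q u with hu | hu
    · rw [Nat.choose_eq_zero_of_lt hu, Nat.choose_eq_zero_of_lt (show q - j < u by omega)]
      ring
    · rcases Nat.lt_or_ge q j with hj | hj
      · rw [Nat.choose_eq_zero_of_lt (show q - u < j by omega),
          Nat.choose_eq_zero_of_lt hj]
        ring
      · rw [Nat.choose_eq_zero_of_lt (show q - u < j by omega),
          Nat.choose_eq_zero_of_lt (show q - j < u by omega)]
        ring

lemma orth2 (q j : ℕ) :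
    ∑ u ∈ range (q+1), (-1:ℤ)^u * ((q.choose u : ℤ) * ((q-u).choose j : ℤ))
      = if j = q then 1 else 0 := by
  have step : ∀ u ∈ range (q+1),
      (-1:ℤ)^u * ((q.choose u : ℤ) * ((q-u).choose j : ℤ))
        = (q.choose j : ℤ) * ((-1)^u * ((q-j).choose u : ℤ)) := by
    intro u _
    have := congrArg (Nat.cast : ℕ → ℤ) (tri q u j)
    push_cast at this
    rw [show (-1:ℤ)^u * ((q.choose u : ℤ) * ((q-u).choose j : ℤ))
        = (-1)^u * ((q.choose u : ℤ) * ((q-u).choose j : ℤ)) from rfl, this]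
    ring
  rw [Finset.sum_congr rfl step, ← Finset.mul_sum, alt_trunc (q - j) q (by omega)]
  by_cases hjq : j = q
  · subst hjq; simp
  · rcases Nat.lt_or_ge j q with hj | hj
    · rw [if_neg (by omega), if_neg hjq]; ring
    · rw [Nat.choose_eq_zero_of_lt (by omega), if_neg hjq]
      simp

lemma lemC (N q r : ℕ) (hqN : q ≤ N) :
    ∑ u ∈ range (q+1), (-1:ℤ)^u * ((q.choose u : ℤ) * ((N-u).choose r : ℤ))
      = if q ≤ r then ((N-q).choose (r-q) : ℤ) else 0 := by
  have expand : ∀ u ∈ range (q+1), ((N-u).choose r : ℤ)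
      = ∑ ij ∈ Finset.HasAntidiagonal.antidiagonal r, ((N-q).choose ij.1 : ℤ) * ((q-u).choose ij.2 : ℤ) := by
    intro u hu
    simp only [mem_range] at hu
    rw [show N - u = (N - q) + (q - u) from by omega, Nat.add_choose_eq]
    push_cast
    rfl
  calc ∑ u ∈ range (q+1), (-1:ℤ)^u * ((q.choose u : ℤ) * ((N-u).choose r : ℤ))
      = ∑ u ∈ range (q+1), ∑ ij ∈ Finset.HasAntidiagonal.antidiagonal r,
          ((N-q).choose ij.1 : ℤ) * ((-1)^u * ((q.choose u : ℤ) * ((q-u).choose ij.2 : ℤ))) := by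
        apply Finset.sum_congr rfl; intro u hu
        rw [expand u hu, Finset.mul_sum, Finset.mul_sum]
        exact Finset.sum_congr rfl fun ij _ => by ring
    _ = ∑ ij ∈ Finset.HasAntidiagonal.antidiagonal r, ((N-q).choose ij.1 : ℤ) *
          (∑ u ∈ range (q+1), (-1:ℤ)^u * ((q.choose u : ℤ) * ((q-u).choose ij.2 : ℤ))) := by
        rw [Finset.sum_comm]
        exact Finset.sum_congr rfl fun ij _ => (Finset.mul_sum _ _ _).symm
    _ = if q ≤ r then ((N-q).choose (r-q) : ℤ) else 0 := by
        rw [Finset.sum_congr rfl (fun ij _ => by rw [orth2 q ij.2])]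
        by_cases hqr : q ≤ r
        · rw [if_pos hqr, Finset.sum_eq_single_of_mem (r - q, q)
            (by rw [Finset.HasAntidiagonal.mem_antidiagonal]; omega)]
          · show ((N-q).choose (r-q) : ℤ) * (if q = q then (1:ℤ) else 0) = _
            rw [if_pos rfl]; ring
          · intro ij hij hne
            rw [Finset.HasAntidiagonal.mem_antidiagonal] at hij
            have hne2 : ij.2 ≠ q := fun hM => hne (Prod.ext (by omega) hM)
            rw [if_neg hne2]; ring
        · rw [if_neg hqr]
          apply Finset.sum_eq_zero
          intro ij hij
          rw [Finset.HasAntidiagonal.mem_antidiagonal] at hij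
          rw [if_neg (by omega)]; ring
lemma tri2 (r s u : ℕ) : r.choose (s+u) * (s+u).choose s = r.choose s * (r-s).choose u := by
  by_cases h : s + u ≤ r
  · have := Nat.choose_mul (n := r) (k := s + u) (s := s) (Nat.le_add_right _ _)
    simpa using this
  · rcases Nat.lt_or_ge r s with hs | hs
    · rw [Nat.choose_eq_zero_of_lt (by omega), Nat.choose_eq_zero_of_lt hs]
      ring
    · rw [Nat.choose_eq_zero_of_lt (by omega),
        Nat.choose_eq_zero_of_lt (show r - s < u by omega)]
      ring

lemma lemInner (n r s m : ℕ) (hrm : r ≤ m) (hmn : m ≤ n) :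
    ∑ a ∈ Finset.Icc r m, (-1:ℤ)^(n+a+s) *
        ((m.choose a : ℤ) * (a.choose r : ℤ) * (a.choose (n-r) : ℤ) * ((n-m).choose s : ℤ))
      = (-1)^(n+s+m) * ((m.choose r : ℤ) * (r.choose (n-m) : ℤ) * ((n-m).choose s : ℤ)) := by
  set f : ℕ → ℤ := fun a => (-1:ℤ)^(n+a+s) *
      ((m.choose a : ℤ) * (a.choose r : ℤ) * (a.choose (n-r) : ℤ) * ((n-m).choose s : ℤ)) with hf
  have h0 : ∀ a < r, f a = 0 := by
    intro a ha
    simp only [hf, Nat.choose_eq_zero_of_lt ha]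
    push_cast
    ring
  have hsub : ∑ a ∈ Finset.Icc r m, f a = ∑ a ∈ range (m+1), f a := by
    apply Finset.sum_subset
    · intro x hx; simp only [Finset.mem_Icc, mem_range] at *; omega
    · intro x hx hx2
      simp only [Finset.mem_Icc, mem_range] at *
      exact h0 x (by omega)
  rw [show (∑ a ∈ Finset.Icc r m, (-1:ℤ)^(n+a+s) *
      ((m.choose a : ℤ) * (a.choose r : ℤ) * (a.choose (n-r) : ℤ) * ((n-m).choose s : ℤ)))
      = ∑ a ∈ Finset.Icc r m, f a from rfl, hsub, shift_sum hrm f h0]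
  have step : ∀ b ∈ range (m - r + 1), f (r + b)
      = ((-1:ℤ)^(n+r+s) * ((m.choose r : ℤ) * ((n-m).choose s : ℤ))) *
        ((-1)^b * (((m-r).choose b : ℤ) * ((r+b).choose (n-r) : ℤ))) := by
    intro b hb
    simp only [mem_range] at hb
    have h1 : m.choose (r+b) * (r+b).choose r = m.choose r * (m-r).choose b := by
      have := Nat.choose_mul (n := m) (k := r + b) (s := r) (Nat.le_add_right _ _)
      simpa using this
    have h2 : ((m.choose (r+b) : ℤ)) * ((r+b).choose r : ℤ) = (m.choose r : ℤ) * ((m-r).choose b : ℤ) := by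
      exact_mod_cast congrArg (Nat.cast : ℕ → ℤ) h1
    simp only [hf]
    rw [show n + (r+b) + s = (n+r+s) + b from by ring, pow_add]
    linear_combination ((-1:ℤ)^(n+r+s) * (-1)^b * (((r+b).choose (n-r) : ℤ)) * (((n-m).choose s : ℤ))) * h2
  rw [Finset.sum_congr rfl step, ← Finset.mul_sum,
    lemA (m - r) r (n - r) (by omega),
    show (n - r) - (m - r) = n - m from by omega]
  have hsign : (-1:ℤ)^(n+r+s) * (-1)^(m-r) = (-1)^(n+s+m) := by
    rw [← pow_add]; congr 1; omega
  linear_combination ((m.choose r : ℤ) * ((n-m).choose s : ℤ) * (r.choose (n-m) : ℤ)) * hsign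

lemma lemB (n r s : ℕ) (hs : s ≤ r) (hr : r + s ≤ n) :
    ∑ t ∈ Finset.Icc s (n-r), (-1:ℤ)^(s+t) *
        (((n-t).choose r : ℤ) * (r.choose t : ℤ) * (t.choose s : ℤ))
      = (r.choose s : ℤ) * ((n-r).choose s : ℤ) := by
  set f : ℕ → ℤ := fun t => (-1:ℤ)^(s+t) *
      (((n-t).choose r : ℤ) * (r.choose t : ℤ) * (t.choose s : ℤ)) with hf
  have h0 : ∀ t < s, f t = 0 := by
    intro t ht
    simp only [hf, Nat.choose_eq_zero_of_lt ht]
    push_cast; ring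
  have hsub : ∑ t ∈ Finset.Icc s (n-r), f t = ∑ t ∈ range (n-r+1), f t := by
    apply Finset.sum_subset
    · intro x hx; simp only [Finset.mem_Icc, mem_range] at *; omega
    · intro x hx hx2
      simp only [Finset.mem_Icc, mem_range] at *
      exact h0 x (by omega)
  rw [show (∑ t ∈ Finset.Icc s (n-r), (-1:ℤ)^(s+t) *
      (((n-t).choose r : ℤ) * (r.choose t : ℤ) * (t.choose s : ℤ)))
      = ∑ t ∈ Finset.Icc s (n-r), f t from rfl, hsub,
    shift_sum (show s ≤ n - r from by omega) f h0]
  have step : ∀ u ∈ range (n - r - s + 1), f (s + u)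
      = (r.choose s : ℤ) * ((-1)^u * (((r-s).choose u : ℤ) * (((n-s)-u).choose r : ℤ))) := by
    intro u hu
    have h1 : ((r.choose (s+u) : ℤ)) * ((s+u).choose s : ℤ)
        = (r.choose s : ℤ) * ((r-s).choose u : ℤ) := by
      exact_mod_cast congrArg (Nat.cast : ℕ → ℤ) (tri2 r s u)
    simp only [hf]
    rw [show n - (s + u) = (n - s) - u from by omega,
      show s + (s + u) = 2 * s + u from by ring, pow_add, pow_mul]
    norm_num
    linear_combination ((-1:ℤ)^u * ((((n-s)-u)).choose r : ℤ)) * h1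
  rw [Finset.sum_congr rfl step, ← Finset.mul_sum]
  have bridge : ∑ u ∈ range (n - r - s + 1),
      (-1:ℤ)^u * (((r-s).choose u : ℤ) * (((n-s)-u).choose r : ℤ))
      = ∑ u ∈ range ((n - r - s) + (r - s) + 1),
      (-1:ℤ)^u * (((r-s).choose u : ℤ) * (((n-s)-u).choose r : ℤ)) := by
    apply Finset.sum_subset
    · intro x hx; simp only [mem_range] at *; omega
    · intro x hx hx2
      simp only [mem_range] at *
      have hq : 1 ≤ r - s := by omega
      rw [Nat.choose_eq_zero_of_lt (show (n-s) - x < r from by omega)]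
      ring
  have bridge2 : ∑ u ∈ range ((r - s) + 1),
      (-1:ℤ)^u * (((r-s).choose u : ℤ) * (((n-s)-u).choose r : ℤ))
      = ∑ u ∈ range ((n - r - s) + (r - s) + 1),
      (-1:ℤ)^u * (((r-s).choose u : ℤ) * (((n-s)-u).choose r : ℤ)) := by
    apply Finset.sum_subset
    · intro x hx; simp only [mem_range] at *; omega
    · intro x hx hx2
      simp only [mem_range] at *
      rw [Nat.choose_eq_zero_of_lt (show r - s < x from by omega)]
      ring
  rw [bridge, ← bridge2, lemC (n-s) (r-s) r (by omega), if_pos (by omega),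
    show (n-s) - (r-s) = n - r from by omega, show r - (r - s) = s from by omega]
/- The hypotheses encode `s ≤ r ≤ n - s` (as integers, `r ≤ n - s` is `r + s ≤ n`).
The sign `(-1)^(n-a-s)` is written as `(-1)^(n+a+s)`, which has the same parity. -/
theorem stmt_6 (n r s : ℕ) (hs : s ≤ r) (hr : r + s ≤ n) :
    ((r.choose s * (n - r).choose s : ℕ) : ℤ)
      = ∑ m ∈ Finset.Icc r (n - s), ∑ a ∈ Finset.Icc r m,
          (-1 : ℤ) ^ (n + a + s) *
            ((m.choose a * a.choose r * a.choose (n - r) * (n - m).choose s : ℕ) : ℤ) := by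

  have h1 : ∀ m ∈ Finset.Icc r (n - s),
      (∑ a ∈ Finset.Icc r m, (-1:ℤ)^(n+a+s) *
        ((m.choose a * a.choose r * a.choose (n-r) * (n-m).choose s : ℕ) : ℤ))
      = (-1:ℤ)^(n+s+m) * ((m.choose r : ℤ) * (r.choose (n-m) : ℤ) * ((n-m).choose s : ℤ)) := by
    intro m hm
    simp only [Finset.mem_Icc] at hm
    rw [← lemInner n r s m hm.1 (by omega)]
    apply Finset.sum_congr rfl
    intro a _
    push_cast
    ring
  rw [Finset.sum_congr rfl h1]
  have h2 : ∑ m ∈ Finset.Icc r (n-s), (-1:ℤ)^(n+s+m) *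
        ((m.choose r : ℤ) * (r.choose (n-m) : ℤ) * ((n-m).choose s : ℤ))
      = ∑ t ∈ Finset.Icc s (n-r), (-1:ℤ)^(s+t) *
        (((n-t).choose r : ℤ) * (r.choose t : ℤ) * (t.choose s : ℤ)) := by
    refine Finset.sum_nbij' (i := fun m => n - m) (j := fun t => n - t) ?_ ?_ ?_ ?_ ?_
    · intro m hm; simp only [Finset.mem_Icc] at *; omega
    · intro t ht; simp only [Finset.mem_Icc] at *; omega
    · intro m hm; simp only [Finset.mem_Icc] at hm; show n - (n - m) = m; omega
    · intro t ht; simp only [Finset.mem_Icc] at ht; show n - (n - t) = t; omega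
    · intro m hm
      simp only [Finset.mem_Icc] at hm
      show _ = (-1:ℤ)^(s+(n-m)) * (((n-(n-m)).choose r : ℤ) * (r.choose (n-m) : ℤ) * ((n-m).choose s : ℤ))
      rw [show n - (n - m) = m from by omega]
      have hsign : (-1:ℤ)^(n+s+m) = (-1)^(s+(n-m)) := by
        rw [show n+s+m = (s+(n-m)) + 2*m from by omega, pow_add, pow_mul]
        norm_num
      rw [hsign]
  rw [h2, lemB n r s hs hr]
  push_cast
  ring
end

section
/- Let k ≥ 2 and n, s ≥ 0. The number of words w ∈ [k]^n such that des_{[2]}(w) = s (descents whose first element is 1 or 2; equivalently, descents of the form a 2 followed by a 1) is Σ_{a ≥ s, b ≥ s, a+b ≤ n} (k−2)^{n−a−b} · C(n−a−b+s, s) · C(n−b, a−s) · C(n−a, b−s), where the sum is over pairs of integers (a,b) with a ≥ s, b ≥ s, and a+b ≤ n. -/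
open Finset

abbrev P : ℕ → Prop := fun x => 1 ≤ x ∧ x ≤ 2


theorem desc_cons {k n : ℕ} (x : Fin k) (w : Fin (n+1) → Fin k) :
    descCount P (Fin.cons x w) = descCount P w + (if (x:ℕ) = 1 ∧ (w 0 : ℕ) = 0 then 1 else 0) := by
  have h : (w 0 < x ∧ P ((x:ℕ) + 1)) ↔ ((x:ℕ) = 1 ∧ (w 0 : ℕ) = 0) := by
    simp only [P, Fin.lt_def]; omega
  simp only [descCount, card_filter, Fintype.sum_prod_type, Fin.sum_univ_succ,
    Fin.cons_zero, Fin.cons_succ, Fin.val_zero, Fin.val_succ]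
  norm_num
  rw [if_congr h rfl rfl]
  omega

theorem desc_one {k : ℕ} (w : Fin 1 → Fin k) : descCount P w = 0 := by
  simp [descCount, card_filter, Fin.sum_univ_succ]

theorem desc_zero {k : ℕ} (w : Fin 0 → Fin k) : descCount P w = 0 := by
  simp [descCount, card_filter]

def L (k n s : ℕ) : ℕ :=
  (Finset.univ.filter (fun w : Fin n → Fin (k+2) => descCount P w = s)).card

theorem sum_cons {k n : ℕ} (f : (Fin (n+1) → Fin (k+2)) → ℕ) :
    ∑ w : Fin (n+1) → Fin (k+2), f w
      = ∑ x : Fin (k+2), ∑ w : Fin n → Fin (k+2), f (Fin.cons x w) := by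
  calc ∑ w : Fin (n+1) → Fin (k+2), f w
      = ∑ p : Fin (k+2) × (Fin n → Fin (k+2)), f (Fin.cons p.1 p.2) :=
        (Fintype.sum_equiv (Fin.consEquiv fun _ => Fin (k+2)) _ _ (fun p => rfl)).symm
    _ = _ := Fintype.sum_prod_type _

theorem L_zero (k s : ℕ) : L k 0 s = if s = 0 then 1 else 0 := by
  rw [L, card_filter]
  simp only [desc_zero]
  rcases s with _ | s <;> simp

theorem L_one (k s : ℕ) : L k 1 s = if s = 0 then k + 2 else 0 := by
  rw [L, card_filter]
  simp only [desc_one]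
  rcases s with _ | s <;> simp [Fintype.card_fun]

theorem L_first (k n s : ℕ) :
    ∑ w : Fin (n+1) → Fin (k+2), (if (w 0 : ℕ) = 0 ∧ descCount P w = s then 1 else 0)
      = L k n s := by
  rw [sum_cons]
  cases n with
  | zero =>
    rw [L_zero]
    simp only [Fin.cons_zero]
    have h : ∀ (x : Fin (k+2)) (w : Fin 0 → Fin (k+2)), descCount P (Fin.cons x w) = 0 :=
      fun x w => desc_one _
    simp only [h, Fin.sum_univ_succ, Fin.val_zero, Fin.val_succ]
    rcases s with _ | s <;> simp
  | succ n =>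
    simp only [Fin.cons_zero, desc_cons]
    rw [Fin.sum_univ_succ]
    simp only [Fin.val_zero, Fin.val_succ]
    simp only [L, card_filter]
    norm_num

theorem L_rec (k n s : ℕ) :
    L k (n+2) s + L k n s = (k+2) * L k (n+1) s + (if s = 0 then 0 else L k n (s-1)) := by
  set A := ∑ w : Fin (n+1) → Fin (k+2), (if descCount P w = s then 1 else 0) with hA
  set B := ∑ w : Fin (n+1) → Fin (k+2), (if (w 0 : ℕ) = 0 ∧ descCount P w = s then 1 else 0) with hB
  set C := ∑ w : Fin (n+1) → Fin (k+2), (if (w 0 : ℕ) = 0 ∧ descCount P w + 1 = s then 1 else 0) with hC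
  set M := ∑ w : Fin (n+1) → Fin (k+2), (if descCount P w + (if (w 0 : ℕ) = 0 then 1 else 0) = s then 1 else 0) with hM
  have e1 : L k (n+2) s = A + (M + k * A) := by
    rw [L, card_filter, sum_cons]
    simp only [desc_cons]
    rw [Fin.sum_univ_succ, Fin.sum_univ_succ]
    simp only [Fin.val_zero, Fin.val_succ]
    norm_num
    rw [hA, hM, card_filter, card_filter]
    simp only [Fin.val_eq_zero_iff]
  have e2 : M + B = C + A := by
    rw [hM, hB, hC, hA, ← Finset.sum_add_distrib, ← Finset.sum_add_distrib]
    refine Finset.sum_congr rfl (fun w _ => ?_)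
    by_cases hc : (w 0 : ℕ) = 0 <;> simp [hc]
  have e3 : B = L k n s := L_first k n s
  have e4 : C = if s = 0 then 0 else L k n (s-1) := by
    rcases s with _ | t
    · simp [hC]
    · simp only [Nat.succ_ne_zero, if_false, Nat.succ_sub_one]
      rw [← L_first k n t, hC]
      refine Finset.sum_congr rfl (fun w _ => ?_)
      congr 1
      simp [Nat.succ_inj]
  have e5 : A = L k (n+1) s := by rw [hA, L, card_filter]
  have e6 : (k+2) * L k (n+1) s = k * A + 2 * A := by rw [e5]; ring
  rw [e6, ← e3, ← e4, e1]
  linarith [e2]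

def G (k s m : ℕ) : ℕ :=
  ∑ c ∈ range (m+1), k ^ c * (c+s).choose s * (m+c+2*s+1).choose (2*c+2*s+1)

theorem pascal2 (M t : ℕ) :
    (M+2).choose (t+2) + M.choose (t+2) = 2 * ((M+1).choose (t+2)) + M.choose t := by
  rw [show (M+2) = (M+1)+1 by rfl, Nat.choose_succ_succ (M+1) (t+1),
    Nat.choose_succ_succ M t, Nat.choose_succ_succ M (t+1)]
  simp only [Nat.succ_eq_add_one, show t+1+1 = t+2 from rfl]
  omega

theorem G_ext (k s m j : ℕ) (h : m ≤ j) :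
    (∑ c ∈ range (j+1), k ^ c * (c+s).choose s * (m+c+2*s+1).choose (2*c+2*s+1)) = G k s m := by
  rw [G]
  refine (Finset.sum_subset (Finset.range_subset_range.mpr (by omega)) (fun c hc hc2 => ?_)).symm
  simp only [mem_range] at hc hc2
  rw [Nat.choose_eq_zero_of_lt (show m+c+2*s+1 < 2*c+2*s+1 by omega), mul_zero]

theorem G_zero (k s : ℕ) : G k s 0 = 1 := by simp [G]

theorem G_one (k s : ℕ) : G k s 1 = (k+2) * (s+1) := by
  rw [G, Finset.sum_range_succ, Finset.sum_range_one]
  have h1 : (1+s).choose s = s+1 := by rw [show 1+s = s+1 by ring, Nat.choose_succ_self_right]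
  have h2 : (0+s).choose s = 1 := by rw [Nat.zero_add, Nat.choose_self]
  have h3 : (1+0+2*s+1).choose (2*0+2*s+1) = 2*s+2 := by
    rw [show 1+0+2*s+1 = (2*0+2*s+1)+1 by ring, Nat.choose_succ_self_right]; omega
  have h4 : (1+1+2*s+1).choose (2*1+2*s+1) = 1 := by
    rw [show 1+1+2*s+1 = 2*1+2*s+1 by ring, Nat.choose_self]
  rw [h1, h2, h3, h4]
  ring

theorem G_rec (k s m : ℕ) :
    G k s (m+2) + G k s m
      = (k+2) * G k s (m+1) + (if s = 0 then 0 else G k (s-1) (m+2)) := by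
  have E1 : G k s (m+2)
      = ∑ c ∈ range (m+2+1), k ^ c * (c+s).choose s * (m+2+c+2*s+1).choose (2*c+2*s+1) := by
    rw [G]
  have E2 : G k s m
      = ∑ c ∈ range (m+2+1), k ^ c * (c+s).choose s * (m+c+2*s+1).choose (2*c+2*s+1) :=
    (G_ext k s m (m+2) (by omega)).symm
  have E3 : 2 * G k s (m+1)
      = ∑ c ∈ range (m+2+1), 2 * (k ^ c * (c+s).choose s * (m+1+c+2*s+1).choose (2*c+2*s+1)) := by
    rw [← Finset.mul_sum, G_ext k s (m+1) (m+2) (by omega)]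
  have E5 : k * G k s (m+1)
      = ∑ c ∈ range (m+2+1), (Nat.casesOn c 0 (fun c' =>
          k ^ (c'+1) * (c'+s).choose s * (m+c'+2*s+2).choose (2*c'+2*s+1)) : ℕ) := by
    rw [G, Finset.mul_sum, Finset.sum_range_succ' (fun c => (Nat.casesOn c 0 (fun c' =>
      k ^ (c'+1) * (c'+s).choose s * (m+c'+2*s+2).choose (2*c'+2*s+1)) : ℕ)) (m+2)]
    simp only [show ∀ (a : ℕ) (f : ℕ → ℕ), (Nat.casesOn 0 a f : ℕ) = a from fun _ _ => rfl,
      show ∀ (n a : ℕ) (f : ℕ → ℕ), (Nat.casesOn (n+1) a f : ℕ) = f n from fun _ _ _ => rfl,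
      add_zero]
    refine Finset.sum_congr rfl (fun c _ => ?_)
    show k * (k ^ c * (c+s).choose s * (m+1+c+2*s+1).choose (2*c+2*s+1))
        = k ^ (c+1) * (c+s).choose s * (m+c+2*s+2).choose (2*c+2*s+1)
    ring_nf
  rw [show (k+2) * G k s (m+1) = k * G k s (m+1) + 2 * G k s (m+1) by ring]
  rcases s with _ | s'
  · simp only [if_pos rfl, add_zero]
    rw [E1, E2, E3, E5, ← Finset.sum_add_distrib, ← Finset.sum_add_distrib]
    refine Finset.sum_congr rfl (fun c _ => ?_)
    rcases c with _ | c'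
    · show k ^ 0 * (0+0).choose 0 * (m+2+0+2*0+1).choose (2*0+2*0+1)
          + k ^ 0 * (0+0).choose 0 * (m+0+2*0+1).choose (2*0+2*0+1)
          = 0 + 2 * (k ^ 0 * (0+0).choose 0 * (m+1+0+2*0+1).choose (2*0+2*0+1))
      norm_num [Nat.choose_one_right]
      omega
    · show k ^ (c'+1) * (c'+1+0).choose 0 * (m+2+(c'+1)+2*0+1).choose (2*(c'+1)+2*0+1)
          + k ^ (c'+1) * (c'+1+0).choose 0 * (m+(c'+1)+2*0+1).choose (2*(c'+1)+2*0+1)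
          = k ^ (c'+1) * (c'+0).choose 0 * (m+c'+2*0+2).choose (2*c'+2*0+1)
            + 2 * (k ^ (c'+1) * (c'+1+0).choose 0 * (m+1+(c'+1)+2*0+1).choose (2*(c'+1)+2*0+1))
      simp only [Nat.choose_zero_right, mul_one]
      have hp := pascal2 (m + c' + 2) (2*c' + 1)
      have h2 : k^(c'+1) * ((m+c'+4).choose (2*c'+3) + (m+c'+2).choose (2*c'+3))
          = k^(c'+1) * (2 * ((m+c'+3).choose (2*c'+3)) + (m+c'+2).choose (2*c'+1)) := by
        rw [show m+c'+4 = m+c'+2+2 by ring, show 2*c'+3 = 2*c'+1+2 by ring,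
          show m+c'+3 = m+c'+2+1 by ring, hp]
      ring_nf at h2 ⊢
      linarith [h2]
  · simp only [Nat.succ_ne_zero, if_false, Nat.succ_sub_one]
    have E4 : G k s' (m+2)
        = ∑ c ∈ range (m+2+1), k ^ c * (c+s').choose s' * (m+2+c+2*s'+1).choose (2*c+2*s'+1) := by
      rw [G]
    rw [E1, E2, E3, E5, E4, ← Finset.sum_add_distrib, ← Finset.sum_add_distrib,
      ← Finset.sum_add_distrib]
    refine Finset.sum_congr rfl (fun c _ => ?_)
    rcases c with _ | c'
    · show k ^ 0 * (0+(s'+1)).choose (s'+1) * (m+2+0+2*(s'+1)+1).choose (2*0+2*(s'+1)+1)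
          + k ^ 0 * (0+(s'+1)).choose (s'+1) * (m+0+2*(s'+1)+1).choose (2*0+2*(s'+1)+1)
          = 0 + 2 * (k ^ 0 * (0+(s'+1)).choose (s'+1) * (m+1+0+2*(s'+1)+1).choose (2*0+2*(s'+1)+1))
            + k ^ 0 * (0+s').choose s' * (m+2+0+2*s'+1).choose (2*0+2*s'+1)
      simp only [Nat.zero_add, Nat.choose_self, pow_zero, one_mul, mul_one]
      have hp := pascal2 (m + 2*s' + 3) (2*s' + 1)
      ring_nf at hp ⊢
      linarith [hp]
    · show k ^ (c'+1) * (c'+1+(s'+1)).choose (s'+1) * (m+2+(c'+1)+2*(s'+1)+1).choose (2*(c'+1)+2*(s'+1)+1)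
          + k ^ (c'+1) * (c'+1+(s'+1)).choose (s'+1) * (m+(c'+1)+2*(s'+1)+1).choose (2*(c'+1)+2*(s'+1)+1)
          = k ^ (c'+1) * (c'+(s'+1)).choose (s'+1) * (m+c'+2*(s'+1)+2).choose (2*c'+2*(s'+1)+1)
            + 2 * (k ^ (c'+1) * (c'+1+(s'+1)).choose (s'+1) * (m+1+(c'+1)+2*(s'+1)+1).choose (2*(c'+1)+2*(s'+1)+1))
            + k ^ (c'+1) * (c'+1+s').choose s' * (m+2+(c'+1)+2*s'+1).choose (2*(c'+1)+2*s'+1)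
      have hp := pascal2 (m + c' + 2*s' + 4) (2*c' + 2*s' + 3)
      have hq := Nat.choose_succ_succ (c'+s'+1) s'
      have h2 : k^(c'+1) * ((c'+s'+2).choose (s'+1)) *
            ((m+c'+2*s'+6).choose (2*c'+2*s'+5) + (m+c'+2*s'+4).choose (2*c'+2*s'+5))
          = k^(c'+1) * ((c'+s'+2).choose (s'+1)) *
            (2 * ((m+c'+2*s'+5).choose (2*c'+2*s'+5)) + (m+c'+2*s'+4).choose (2*c'+2*s'+3)) := by
        rw [show m+c'+2*s'+6 = m+c'+2*s'+4+2 by ring, show 2*c'+2*s'+5 = 2*c'+2*s'+3+2 by ring,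
          show m+c'+2*s'+5 = m+c'+2*s'+4+1 by ring, hp]
      have h3 : k^(c'+1) * ((c'+s'+2).choose (s'+1)) * ((m+c'+2*s'+4).choose (2*c'+2*s'+3))
          = k^(c'+1) * ((c'+s'+1).choose s' + (c'+s'+1).choose (s'+1))
              * ((m+c'+2*s'+4).choose (2*c'+2*s'+3)) := by
        rw [show c'+s'+2 = (c'+s'+1)+1 by ring, Nat.choose_succ_succ]
      ring_nf at h2 h3 ⊢
      linarith [h2, h3]

theorem choose_shift (j u : ℕ) : (j+u).choose j = (j+u).choose u := by
  have h := Nat.choose_symm (show u ≤ j+u by omega)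
  rw [show j+u-u = j by omega] at h
  exact h

theorem hockey (u r : ℕ) :
    ∑ j ∈ range (r+1), (j+u).choose j = (r+u+1).choose r := by
  have h2 : ∑ j ∈ range (r+1), (j+u).choose u = ∑ x ∈ Icc u (u+r), x.choose u := by
    apply Finset.sum_nbij' (fun j => j + u) (fun x => x - u)
    · intro a ha; simp only [mem_range] at ha; simp only [mem_Icc]; omega
    · intro a ha; simp only [mem_Icc] at ha; simp only [mem_range]; omega
    · intro a _; omega
    · intro a ha; simp only [mem_Icc] at ha; omega
    · intro a _; rfl
  have h3 := Nat.choose_symm (show u+1 ≤ u+r+1 by omega)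
  rw [show u+r+1-(u+1) = r by omega] at h3
  calc ∑ j ∈ range (r+1), (j+u).choose j
      = ∑ j ∈ range (r+1), (j+u).choose u := Finset.sum_congr rfl (fun j _ => choose_shift j u)
    _ = ∑ x ∈ Icc u (u+r), x.choose u := h2
    _ = (u+r+1).choose (u+1) := Nat.sum_Icc_choose _ _
    _ = (u+r+1).choose r := h3.symm
    _ = (r+u+1).choose r := by rw [show u+r+1 = r+u+1 by ring]

theorem conv (t : ℕ) : ∀ u r, ∑ i ∈ range (r+1), (i+t).choose i * ((r-i)+u).choose (r-i)
    = (r+t+u+1).choose r := by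
  induction t with
  | zero =>
    intro u r
    simp only [Nat.add_zero, Nat.choose_self, one_mul]
    rw [← Finset.sum_range_reflect]
    have h : ∀ i ∈ range (r+1), (r - (r+1-1-i) + u).choose (r - (r+1-1-i)) = (i+u).choose i := by
      intro i hi; simp only [mem_range] at hi
      congr 1 <;> omega
    rw [Finset.sum_congr rfl h, hockey]
  | succ t ih =>
    intro u r
    induction r with
    | zero => simp
    | succ r ihr =>
      have split : ∀ i ∈ range (r+2), (i+(t+1)).choose i * ((r+1-i)+u).choose (r+1-i)
          = (i+t).choose i * ((r+1-i)+u).choose (r+1-i)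
            + (Nat.casesOn i 0 (fun i' => (i'+(t+1)).choose i' * ((r-i')+u).choose (r-i')) : ℕ) := by
        intro i _
        rcases i with _ | i'
        · simp
        · have hp : (i'+1+(t+1)).choose (i'+1) = (i'+1+t).choose (i'+1) + (i'+(t+1)).choose i' := by
            rw [show i'+1+(t+1) = (i'+t+1)+1 by ring, Nat.choose_succ_succ]
            simp only [Nat.succ_eq_add_one]
            rw [show i'+t+1 = i'+(t+1) by ring, show i'+1+t = i'+(t+1) by ring]
            omega
          rw [hp, show r+1-(i'+1) = r-i' by omega]
          ring
      rw [Finset.sum_congr rfl split, Finset.sum_add_distrib, ih u (r+1),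
        Finset.sum_range_succ' (fun i => (Nat.casesOn i 0
          (fun i' => (i'+(t+1)).choose i' * ((r-i')+u).choose (r-i')) : ℕ)) (r+1)]
      simp only [show ∀ (a : ℕ) (f : ℕ → ℕ), (Nat.casesOn 0 a f : ℕ) = a from fun _ _ => rfl,
        show ∀ (n a : ℕ) (f : ℕ → ℕ), (Nat.casesOn (n+1) a f : ℕ) = f n from fun _ _ _ => rfl,
        add_zero]
      rw [ihr]
      have hps : (r+t+u+2+1).choose (r+1) = (r+t+u+2).choose r + (r+t+u+2).choose (r+1) :=
        Nat.choose_succ_succ (r+t+u+2) r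
      rw [show r+1+(t+1)+u+1 = r+t+u+2+1 by ring, hps,
        show r+1+t+u+1 = r+t+u+2 by ring, show r+(t+1)+u+1 = r+t+u+2 by ring]
      omega

def R (k n s : ℕ) : ℕ := if 2*s ≤ n then G k s (n - 2*s) else 0


theorem R_rec (k n s : ℕ) :
    R k (n+2) s + R k n s = (k+2) * R k (n+1) s + (if s = 0 then 0 else R k n (s-1)) := by
  rcases s with _ | s'
  · have hG := G_rec k 0 n
    rw [if_pos rfl] at hG
    simp only [R, Nat.mul_zero, Nat.zero_le, if_pos, Nat.sub_zero, if_pos rfl]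
    simpa using hG
  · rw [if_neg (Nat.succ_ne_zero s'), Nat.succ_sub_one]
    by_cases h1 : 2*(s'+1) ≤ n
    · obtain ⟨m, rfl⟩ : ∃ m, n = m + 2*(s'+1) := ⟨n - 2*(s'+1), by omega⟩
      have hG := G_rec k (s'+1) m
      rw [if_neg (Nat.succ_ne_zero s'), Nat.succ_sub_one] at hG
      rw [R, R, R, R, if_pos (by omega), if_pos (by omega), if_pos (by omega), if_pos (by omega),
        show m+2*(s'+1)+2-2*(s'+1) = m+2 by omega, show m+2*(s'+1)-2*(s'+1) = m by omega,
        show m+2*(s'+1)+1-2*(s'+1) = m+1 by omega, show m+2*(s'+1)-2*s' = m+2 by omega]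
      exact hG
    · by_cases h2 : n = 2*s'+1
      · subst h2
        rw [R, R, R, R, if_pos (by omega), if_neg (by omega), if_pos (by omega), if_pos (by omega),
          show 2*s'+1+2-2*(s'+1) = 1 by omega, show 2*s'+1+1-2*(s'+1) = 0 by omega,
          show 2*s'+1-2*s' = 1 by omega, G_one, G_zero, G_one]
        ring
      · by_cases h3 : n = 2*s'
        · subst h3
          rw [R, R, R, R, if_pos (by omega), if_neg (by omega), if_neg (by omega),
            if_pos (by omega), show 2*s'+2-2*(s'+1) = 0 by omega, show 2*s'-2*s' = 0 by omega,
            G_zero, G_zero]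
          simp
        · rw [R, R, R, R, if_neg (by omega), if_neg (by omega), if_neg (by omega),
            if_neg (by omega)]
          simp

theorem Rsum_eq (k n s : ℕ) :
    (∑ a ∈ Icc s n, ∑ b ∈ Icc s (n-a),
      k ^ (n-a-b) * (n-a-b+s).choose s * (n-b).choose (a-s) * (n-a).choose (b-s))
    = R k n s := by
  by_cases h : 2*s ≤ n
  · obtain ⟨m, rfl⟩ : ∃ m, n = m + 2*s := ⟨n - 2*s, by omega⟩
    rw [R, if_pos h, show m+2*s-2*s = m by omega]
    have step1 : (∑ a ∈ Icc s (m+2*s), ∑ b ∈ Icc s (m+2*s-a),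
        k^(m+2*s-a-b) * (m+2*s-a-b+s).choose s * (m+2*s-b).choose (a-s) * (m+2*s-a).choose (b-s))
        = ∑ c ∈ range (m+1), ∑ i ∈ range (m-c+1),
            k ^ c * (c+s).choose s * ((i+(c+s)).choose i * (((m-c)-i)+(c+s)).choose ((m-c)-i)) := by
      rw [Finset.sum_sigma', Finset.sum_sigma']
      apply Finset.sum_nbij'
        (i := fun p : (_ : ℕ) × ℕ => (⟨m+2*s-p.1-p.2, p.1-s⟩ : (_ : ℕ) × ℕ))
        (j := fun q : (_ : ℕ) × ℕ => (⟨q.2+s, m-q.1-q.2+s⟩ : (_ : ℕ) × ℕ))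
      · rintro ⟨a,b⟩ hab
        simp only [mem_sigma, mem_Icc, mem_range] at hab ⊢
        omega
      · rintro ⟨c,i⟩ hci
        simp only [mem_sigma, mem_Icc, mem_range] at hci ⊢
        omega
      · rintro ⟨a,b⟩ hab
        simp only [mem_sigma, mem_Icc] at hab
        show (⟨(a-s)+s, m-(m+2*s-a-b)-(a-s)+s⟩ : (_ : ℕ) × ℕ) = ⟨a, b⟩
        exact Sigma.ext (show (a-s)+s = a by omega)
          (heq_of_eq (show m-(m+2*s-a-b)-(a-s)+s = b by omega))
      · rintro ⟨c,i⟩ hci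
        simp only [mem_sigma, mem_range] at hci
        show (⟨m+2*s-(i+s)-(m-c-i+s), (i+s)-s⟩ : (_ : ℕ) × ℕ) = ⟨c, i⟩
        exact Sigma.ext (show m+2*s-(i+s)-(m-c-i+s) = c by omega)
          (heq_of_eq (show (i+s)-s = i by omega))
      · rintro ⟨a,b⟩ hab
        simp only [mem_sigma, mem_Icc] at hab
        show k ^ (m+2*s-a-b) * (m+2*s-a-b+s).choose s * (m+2*s-b).choose (a-s)
              * (m+2*s-a).choose (b-s)
            = k ^ (m+2*s-a-b) * ((m+2*s-a-b)+s).choose s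
              * (((a-s)+((m+2*s-a-b)+s)).choose (a-s)
                * ((m-(m+2*s-a-b)-(a-s))+((m+2*s-a-b)+s)).choose (m-(m+2*s-a-b)-(a-s)))
        obtain ⟨⟨ha1, ha2⟩, hb1, hb2⟩ := hab
        generalize hcc : m+2*s-a-b = c
        have hcc' : m+2*s-a-b = c := hcc
        rw [show m+2*s-b = (a-s)+(c+s) by omega, show b-s = m-c-(a-s) by omega,
          show m+2*s-a = (m-c-(a-s))+(c+s) by omega, show c+s = c+s from rfl]
        ring
    rw [step1, G]
    apply Finset.sum_congr rfl
    intro c hc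
    simp only [mem_range] at hc
    rw [← Finset.mul_sum, conv (c+s) (c+s) (m-c)]
    have e5 := Nat.choose_symm (show 2*c+2*s+1 ≤ m+c+2*s+1 by omega)
    rw [show m+c+2*s+1-(2*c+2*s+1) = m-c by omega] at e5
    rw [show (m-c)+(c+s)+(c+s)+1 = m+c+2*s+1 by omega, e5]
  · rw [R, if_neg h]
    apply Finset.sum_eq_zero
    intro a ha
    simp only [mem_Icc] at ha
    rw [Finset.Icc_eq_empty (by omega), Finset.sum_empty]


theorem L_eq_R (k : ℕ) : ∀ n s, L k n s = R k n s := by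
  intro n
  induction n using Nat.strong_induction_on with
  | _ n ih =>
    match n with
    | 0 =>
      intro s
      rw [L_zero, R]
      rcases s with _ | s
      · simp [G_zero]
      · simp
    | 1 =>
      intro s
      rw [L_one, R]
      rcases s with _ | s
      · simp [G_one]
      · rw [if_neg (by omega), if_neg (by omega)]
    | (n+2) =>
      intro s
      have h1 := L_rec k n s
      have h2 := R_rec k n s
      have e0 : L k n s = R k n s := ih n (by omega) s
      have e1 : L k (n+1) s = R k (n+1) s := ih (n+1) (by omega) s
      have e2 : (if s = 0 then 0 else L k n (s-1)) = (if s = 0 then 0 else R k n (s-1)) := by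
        rcases s with _ | s
        · rfl
        · simp only [Nat.succ_ne_zero, if_false]
          exact ih n (by omega) (s+1-1)
      rw [e0, e1, e2] at h1
      generalize hq : (k+2) * R k (n+1) s = q at h1 h2
      omega

/- The sum over pairs `(a, b)` with `a, b ≥ s` and `a + b ≤ n` is written as the
iterated sum over `a ∈ [s, n]` and `b ∈ [s, n - a]`. -/
theorem stmt_7 (k n s : ℕ) (hk : 2 ≤ k) :
    (Finset.univ.filter (fun w : Fin n → Fin k =>
        descCount (fun x => 1 ≤ x ∧ x ≤ 2) w = s)).card
      = ∑ a ∈ Finset.Icc s n, ∑ b ∈ Finset.Icc s (n - a),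
          (k - 2) ^ (n - a - b) * (n - a - b + s).choose s
            * (n - b).choose (a - s) * (n - a).choose (b - s) := by
  obtain ⟨k', rfl⟩ : ∃ k', k = k' + 2 := ⟨k - 2, by omega⟩
  have hL : (Finset.univ.filter (fun w : Fin n → Fin (k'+2) =>
      descCount (fun x => 1 ≤ x ∧ x ≤ 2) w = s)).card = L k' n s := rfl
  rw [hL, L_eq_R, ← Rsum_eq]
  apply Finset.sum_congr rfl
  intro a _
  apply Finset.sum_congr rfl
  intro b _
  rw [show k'+2-2 = k' by omega]
end

section
/- Let k ≥ 1 and n, p ≥ 0. The number of words π ∈ [2k]^n with des_O(π) = p, where O is the set of odd positive integers (equivalently, the number of words π ∈ [2k]^n with ris_E(π) = p, where E is the set of even positive integers), equals Σ_{j=0}^{n} Σ_{i=0}^{j} (−1)^{n+p+i} · 2^{j} · C(j, i) · C(k·i, n) · C(n−j, p). -/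
open Finset

/-- The number of rises of the word `w` whose first element satisfies `X`. -/
def riseCount (X : ℕ → Prop) [DecidablePred X] {k n : ℕ} (w : Fin n → Fin k) : ℕ :=
  (Finset.univ.filter (fun p : Fin n × Fin n =>
    (p.1 : ℕ) + 1 = (p.2 : ℕ) ∧ (w p.1 : ℕ) < (w p.2 : ℕ) ∧ X ((w p.1 : ℕ) + 1))).card

namespace S11

variable {K : ℕ}

lemma descCount_eq_sum (X : ℕ → Prop) [DecidablePred X] {n : ℕ} (w : Fin n → Fin K) :
    descCount X w = ∑ i : Fin n, ∑ j : Fin n,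
      if ((i : ℕ) + 1 = (j : ℕ) ∧ (w j : ℕ) < (w i : ℕ) ∧ X ((w i : ℕ) + 1)) then 1 else 0 := by
  rw [descCount, Finset.card_filter, Fintype.sum_prod_type]

lemma descCount_one (X : ℕ → Prop) [DecidablePred X] (w : Fin 1 → Fin K) :
    descCount X w = 0 := by
  rw [descCount_eq_sum]
  simp

lemma descCount_cons (X : ℕ → Prop) [DecidablePred X] {n : ℕ} (a : Fin K)
    (w : Fin (n + 1) → Fin K) :
    descCount X (Fin.cons a w) =
      descCount X w + (if ((w 0 : ℕ) < (a : ℕ) ∧ X ((a : ℕ) + 1)) then 1 else 0) := by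
  rw [descCount_eq_sum, descCount_eq_sum]
  rw [Fin.sum_univ_succ]
  have h0 : (∑ j : Fin (n + 2), if ((0 : Fin (n+2)) : ℕ) + 1 = (j : ℕ) ∧
      ((Fin.cons a w : Fin (n+2) → Fin K) j : ℕ) < ((Fin.cons a w : Fin (n+2) → Fin K) 0 : ℕ) ∧
      X (((Fin.cons a w : Fin (n+2) → Fin K) 0 : ℕ) + 1) then 1 else 0) =
      (if ((w 0 : ℕ) < (a : ℕ) ∧ X ((a : ℕ) + 1)) then 1 else 0) := by
    rw [Fin.sum_univ_succ, Fin.sum_univ_succ]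
    simp [Fin.cons_zero, Fin.cons_succ]
  rw [h0, add_comm]
  congr 1
  apply Finset.sum_congr rfl
  intro i _
  rw [Fin.sum_univ_succ]
  simp [Fin.cons_succ, Fin.val_succ]


lemma descCount_le (X : ℕ → Prop) [DecidablePred X] :
    ∀ {n : ℕ} (w : Fin (n + 1) → Fin K), descCount X w ≤ n := by
  intro n
  induction n with
  | zero => intro w; rw [descCount_one]
  | succ n ih =>
    intro w
    rw [← Fin.cons_self_tail w, descCount_cons]
    have := ih (Fin.tail w)
    split <;> omega

/-- sum over length-(n+1) words splits into first letter and tail -/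
lemma sum_words_succ {n : ℕ} (f : (Fin (n + 1) → Fin K) → ℕ) :
    ∑ w : Fin (n + 1) → Fin K, f w
      = ∑ a : Fin K, ∑ w' : Fin n → Fin K, f (Fin.cons a w') := by
  rw [← Equiv.sum_comp (Fin.consEquiv (fun _ : Fin (n + 1) => Fin K)) f, Fintype.sum_prod_type]
  rfl

lemma sum_words_one (f : (Fin 1 → Fin K) → ℕ) :
    ∑ w : Fin 1 → Fin K, f w = ∑ a : Fin K, f (fun _ => a) := by
  rw [← Equiv.sum_comp (Equiv.funUnique (Fin 1) (Fin K)).symm f]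
  rfl


section arith

lemma sum_range_double (g : ℕ → ℕ) : ∀ k : ℕ, ∑ v ∈ range (2 * k), g (v / 2) = ∑ c ∈ range k, 2 * g c := by
  intro k
  induction k with
  | zero => simp
  | succ k ih =>
    have h2 : 2 * (k + 1) = (2 * k) + 1 + 1 := by ring
    rw [h2, sum_range_succ, sum_range_succ, ih, sum_range_succ]
    have e1 : (2 * k) / 2 = k := by omega
    have e2 : (2 * k + 1) / 2 = k := by omega
    rw [e1, e2]
    ring

lemma sum_range_double_even (g : ℕ → ℕ) (b : ℕ) :
    ∀ k : ℕ, ∑ v ∈ range (2 * k), (if b < v ∧ v % 2 = 0 then g (v / 2) else 0)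
      = ∑ c ∈ range k, (if b < 2 * c then g c else 0) := by
  intro k
  induction k with
  | zero => simp
  | succ k ih =>
    have h2 : 2 * (k + 1) = (2 * k) + 1 + 1 := by ring
    rw [h2, sum_range_succ, sum_range_succ, ih, sum_range_succ]
    have e1 : (2 * k) / 2 = k := by omega
    have e2 : ¬((2 * k + 1) % 2 = 0) := by omega
    have e3 : (2 * k) % 2 = 0 := by omega
    simp only [e1, e3, and_true]
    rw [if_neg (by omega : ¬(b < 2 * k + 1 ∧ (2 * k + 1) % 2 = 0))]
    omega

lemma sum_range_choose_eq (r : ℕ) : ∀ k : ℕ, ∑ c ∈ range k, Nat.choose c r = Nat.choose k (r + 1) := by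
  intro k
  induction k with
  | zero => simp
  | succ k ih => rw [sum_range_succ, ih, Nat.choose_succ_succ' k r]; omega

lemma sum_range_shift {M : Type*} [AddCommMonoid M] (f : ℕ → M) (N p : ℕ) :
    ∑ m ∈ range N, (if p ≤ m then f m else 0) = ∑ u ∈ range (N - p), f (p + u) := by
  rw [← Finset.sum_filter]
  have h : filter (fun m => p ≤ m) (range N) = Ico p N := by
    ext m; simp [Finset.mem_filter, Finset.mem_range, Finset.mem_Ico]; omega
  rw [h, Finset.sum_Ico_eq_sum_range]

end arith


section counting

variable (k : ℕ)

lemma sum_fin_weight (r : ℕ) :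
    ∑ a : Fin (2 * k), (k - 1 - (a : ℕ) / 2).choose r = 2 * k.choose (r + 1) := by
  rw [Fin.sum_univ_eq_sum_range (fun v => (k - 1 - v / 2).choose r) (2 * k)]
  rw [show (fun v => (k - 1 - v / 2).choose r) = (fun v => (fun c => (k - 1 - c).choose r) (v / 2)) from rfl,
    sum_range_double (fun c => (k - 1 - c).choose r) k, ← Finset.mul_sum]
  congr 1
  rw [sum_range_reflect (fun c => (c).choose r) k, sum_range_choose_eq r k]

lemma sum_fin_weight_even_gt (r b : ℕ) :
    ∑ a : Fin (2 * k), (if b < (a : ℕ) ∧ (a : ℕ) % 2 = 0 then (k - 1 - (a : ℕ) / 2).choose r else 0)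
      = (k - 1 - b / 2).choose (r + 1) := by
  rw [Fin.sum_univ_eq_sum_range (fun v => if b < v ∧ v % 2 = 0 then (k - 1 - v / 2).choose r else 0) (2 * k)]
  rw [sum_range_double_even (fun c => (k - 1 - c).choose r) b k]
  have h : ∀ c, (if b < 2 * c then (k - 1 - c).choose r else 0)
      = (if b / 2 + 1 ≤ c then (fun c => (k - 1 - c).choose r) c else 0) := by
    intro c
    have : (b < 2 * c) ↔ (b / 2 + 1 ≤ c) := by omega
    simp [this]
  rw [Finset.sum_congr rfl (fun c _ => h c), sum_range_shift (fun c => (k - 1 - c).choose r) k (b / 2 + 1)]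
  have h2 : ∀ u ∈ range (k - (b / 2 + 1)), (k - 1 - (b / 2 + 1 + u)).choose r
      = ((k - (b / 2 + 1)) - 1 - u).choose r := by
    intro u hu; congr 1; omega
  rw [Finset.sum_congr rfl h2, sum_range_reflect (fun c => (c).choose r) (k - (b / 2 + 1)),
    sum_range_choose_eq r (k - (b / 2 + 1))]
  congr 1
  omega

end counting


def Dv (k n m : ℕ) : ℕ :=
  ∑ w : Fin n → Fin (2 * k), (descCount (fun x => x % 2 = 1) w).choose m

def Wv (k r n m : ℕ) : ℕ :=
  ∑ w : Fin (n + 1) → Fin (2 * k),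
    (k - 1 - (w 0 : ℕ) / 2).choose r * (descCount (fun x => x % 2 = 1) w).choose m

section recursions

variable (k : ℕ)

lemma inner_sum (r m d b : ℕ) :
    ∑ a : Fin (2 * k), (k - 1 - (a : ℕ) / 2).choose r *
        (d + if b < (a : ℕ) ∧ (a : ℕ) % 2 = 0 then 1 else 0).choose (m + 1)
      = 2 * k.choose (r + 1) * d.choose (m + 1)
        + (k - 1 - b / 2).choose (r + 1) * d.choose m := by
  have h : ∀ a : Fin (2 * k), (k - 1 - (a : ℕ) / 2).choose r *
        (d + if b < (a : ℕ) ∧ (a : ℕ) % 2 = 0 then 1 else 0).choose (m + 1)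
      = (k - 1 - (a : ℕ) / 2).choose r * d.choose (m + 1)
        + (if b < (a : ℕ) ∧ (a : ℕ) % 2 = 0 then (k - 1 - (a : ℕ) / 2).choose r else 0)
            * d.choose m := by
    intro a
    by_cases hx : b < (a : ℕ) ∧ (a : ℕ) % 2 = 0
    · rw [if_pos hx, if_pos hx, Nat.choose_succ_succ d m]
      ring
    · rw [if_neg hx, if_neg hx]
      simp
  rw [Finset.sum_congr rfl (fun a _ => h a), Finset.sum_add_distrib,
    ← Finset.sum_mul, ← Finset.sum_mul, sum_fin_weight, sum_fin_weight_even_gt]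

lemma cons_desc (n : ℕ) (a : Fin (2 * k)) (w' : Fin (n + 1) → Fin (2 * k)) :
    descCount (fun x => x % 2 = 1) (Fin.cons a w')
      = descCount (fun x => x % 2 = 1) w'
        + if (w' 0 : ℕ) < (a : ℕ) ∧ (a : ℕ) % 2 = 0 then 1 else 0 := by
  rw [descCount_cons]
  have : ((w' 0 : ℕ) < (a : ℕ) ∧ ((a : ℕ) + 1) % 2 = 1) ↔ ((w' 0 : ℕ) < (a : ℕ) ∧ (a : ℕ) % 2 = 0) := by omega
  simp only [this]

lemma D_succ (n m : ℕ) :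
    Dv k (n + 2) (m + 1) = 2 * k * Dv k (n + 1) (m + 1) + Wv k 1 n m := by
  rw [Dv, sum_words_succ, Finset.sum_comm]
  have h : ∀ w' : Fin (n + 1) → Fin (2 * k),
      (∑ a : Fin (2 * k), (descCount (fun x => x % 2 = 1) (Fin.cons a w')).choose (m + 1))
        = 2 * k * (descCount (fun x => x % 2 = 1) w').choose (m + 1)
          + (k - 1 - (w' 0 : ℕ) / 2).choose 1 * (descCount (fun x => x % 2 = 1) w').choose m := by
    intro w'
    have := inner_sum k 0 m (descCount (fun x => x % 2 = 1) w') ((w' 0 : ℕ))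
    simp only [Nat.choose_zero_right, one_mul, Nat.choose_one_right] at this
    calc (∑ a : Fin (2 * k), (descCount (fun x => x % 2 = 1) (Fin.cons a w')).choose (m + 1))
        = ∑ a : Fin (2 * k), ((descCount (fun x => x % 2 = 1) w')
            + if (w' 0 : ℕ) < (a : ℕ) ∧ (a : ℕ) % 2 = 0 then 1 else 0).choose (m + 1) := by
          exact Finset.sum_congr rfl (fun a _ => by rw [cons_desc])
      _ = _ := by rw [this]; congr 1; rw [Nat.choose_one_right]
  rw [Finset.sum_congr rfl (fun w' _ => h w'), Finset.sum_add_distrib, ← Finset.mul_sum]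
  rfl

lemma W_succ (r n m : ℕ) :
    Wv k r (n + 1) (m + 1)
      = 2 * k.choose (r + 1) * Dv k (n + 1) (m + 1) + Wv k (r + 1) n m := by
  rw [Wv, sum_words_succ, Finset.sum_comm]
  have h : ∀ w' : Fin (n + 1) → Fin (2 * k),
      (∑ a : Fin (2 * k), (k - 1 - ((Fin.cons a w' : Fin (n+2) → Fin (2*k)) 0 : ℕ) / 2).choose r
          * (descCount (fun x => x % 2 = 1) (Fin.cons a w')).choose (m + 1))
        = 2 * k.choose (r + 1) * (descCount (fun x => x % 2 = 1) w').choose (m + 1)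
          + (k - 1 - (w' 0 : ℕ) / 2).choose (r + 1)
              * (descCount (fun x => x % 2 = 1) w').choose m := by
    intro w'
    rw [← inner_sum k r m (descCount (fun x => x % 2 = 1) w') ((w' 0 : ℕ))]
    apply Finset.sum_congr rfl
    intro a _
    rw [Fin.cons_zero, cons_desc]
  rw [Finset.sum_congr rfl (fun w' _ => h w'), Finset.sum_add_distrib, ← Finset.mul_sum]
  rfl

lemma W_succ_zero (r n : ℕ) :
    Wv k r (n + 1) 0 = 2 * k.choose (r + 1) * Dv k (n + 1) 0 := by
  rw [Wv, sum_words_succ, Finset.sum_comm, Dv, Finset.mul_sum]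
  apply Finset.sum_congr rfl
  intro w' _
  simp only [Nat.choose_zero_right, mul_one]
  rw [← sum_fin_weight k r]
  apply Finset.sum_congr rfl
  intro a _
  rw [Fin.cons_zero]

lemma Dv_one (m : ℕ) : Dv k 1 m = 2 * k * Nat.choose 0 m := by
  rw [Dv, sum_words_one]
  simp only [descCount_one]
  rw [Finset.sum_const, Finset.card_univ, Fintype.card_fin, smul_eq_mul]

lemma Wv_zero (r m : ℕ) : Wv k r 0 m = 2 * k.choose (r + 1) * Nat.choose 0 m := by
  rw [Wv, sum_words_one]
  simp only [descCount_one]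
  rw [← Finset.sum_mul, sum_fin_weight]

lemma D_vanish (n m : ℕ) (h : n + 1 ≤ m) : Dv k (n + 1) m = 0 := by
  rw [Dv]
  apply Finset.sum_eq_zero
  intro w _
  exact Nat.choose_eq_zero_of_lt (lt_of_le_of_lt (descCount_le _ w) (by omega))

end recursions


def Nf (k n j : ℕ) : ℤ :=
  ∑ i ∈ range (j + 1), (-1) ^ (j + i) * (j.choose i : ℤ) * ((k * i).choose n : ℤ)

section algebra

variable (k : ℕ)

lemma neg_one_pow_mod (a : ℕ) : (-1 : ℤ) ^ a = (-1) ^ (a % 2) := by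
  conv_lhs => rw [← Nat.div_add_mod a 2]
  rw [pow_add, pow_mul, neg_one_sq, one_pow, one_mul]

lemma neg_one_pow_congr {a b : ℕ} (h : a % 2 = b % 2) : (-1 : ℤ) ^ a = (-1) ^ b := by
  rw [neg_one_pow_mod a, neg_one_pow_mod b, h]

lemma Nf_zero_zero : Nf k 0 0 = 1 := by simp [Nf]

lemma Nf_pos_zero (N : ℕ) : Nf k (N + 1) 0 = 0 := by simp [Nf]

lemma Nf_diag_one : Nf k 1 1 = k := by
  rw [Nf]
  rw [Finset.sum_range_succ, Finset.sum_range_succ, Finset.sum_range_zero]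
  simp

lemma Nf_zero_left (J : ℕ) : Nf k 0 (J + 1) = 0 := by
  rw [Nf]
  have h : ∀ i ∈ range (J + 2), (-1 : ℤ) ^ (J + 1 + i) * ((J + 1).choose i : ℤ)
      * (((k * i).choose 0 : ℕ) : ℤ) = (-1) ^ (J + 1) * ((-1) ^ i * ((J + 1).choose i : ℤ)) := by
    intro i _
    rw [Nat.choose_zero_right, pow_add]
    push_cast
    ring
  rw [Finset.sum_congr rfl h, ← Finset.mul_sum, Int.alternating_sum_range_choose_of_ne
    (Nat.succ_ne_zero J), mul_zero]

lemma Nf_one_left (J : ℕ) : Nf k 1 (J + 2) = 0 := by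
  rw [Nf]
  rw [Finset.sum_range_succ']
  have h0 : (-1 : ℤ) ^ (J + 2 + 0) * ((J + 2).choose 0 : ℤ) * (((k * 0).choose 1 : ℕ) : ℤ) = 0 := by
    simp
  rw [h0, add_zero]
  have h : ∀ i ∈ range (J + 2), (-1 : ℤ) ^ (J + 2 + (i + 1)) * ((J + 2).choose (i + 1) : ℤ)
      * (((k * (i + 1)).choose 1 : ℕ) : ℤ)
      = ((-1) ^ (J + 1) * (k * (J + 2))) * ((-1) ^ i * ((J + 1).choose i : ℤ)) := by
    intro i _
    have hc : (J + 2).choose (i + 1) * (i + 1) = (J + 2) * (J + 1).choose i := by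
      rw [← Nat.add_one_mul_choose_eq]
    have hsgn : (-1 : ℤ) ^ (J + 2 + (i + 1)) = (-1) ^ (J + 1) * (-1) ^ i := by
      rw [← pow_add]
      apply neg_one_pow_congr
      omega
    rw [Nat.choose_one_right, hsgn]
    have : ((J + 2).choose (i + 1) : ℤ) * (k * (i + 1)) = (k * ((J + 2) * (J + 1).choose i) : ℤ) := by
      rw [show ((J+2).choose (i+1) : ℤ) * (k * (i+1)) = k * (((J+2).choose (i+1)) * (i+1)) by ring]
      exact_mod_cast congrArg (fun x : ℕ => (k : ℤ) * x) hc
    push_cast at this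
    calc (-1:ℤ) ^ (J + 1) * (-1) ^ i * ((J + 2).choose (i + 1) : ℤ) * (k * (i + 1))
        = ((-1:ℤ) ^ (J + 1) * (-1) ^ i) * (((J + 2).choose (i + 1) : ℤ) * (k * (i + 1))) := by ring
      _ = ((-1:ℤ) ^ (J + 1) * (-1) ^ i) * ((k : ℤ) * ((J + 2) * ((J + 1).choose i : ℤ))) := by rw [this]
      _ = (-1) ^ (J + 1) * ((k:ℤ) * ((J:ℤ) + 2)) * ((-1) ^ i * ((J + 1).choose i : ℤ)) := by ring
  rw [Finset.sum_congr rfl h, ← Finset.mul_sum, Int.alternating_sum_range_choose_of_ne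
    (Nat.succ_ne_zero J), mul_zero]

end algebra


section key

variable (k : ℕ)

/-- Vandermonde, peeled: `C(ki+k, n+2) = C(ki,n+2) + k·C(ki,n+1) + ∑_u C(k,u+2)·C(ki,n-u)`. -/
lemma vander_peel (i n : ℕ) :
    (k * i + k).choose (n + 2)
      = (k * i).choose (n + 2) + k * (k * i).choose (n + 1)
        + ∑ u ∈ range (n + 1), k.choose (u + 2) * (k * i).choose (n - u) := by
  have h := Nat.add_choose_eq k (k * i) (n + 2)
  rw [Finset.Nat.sum_antidiagonal_eq_sum_range_succ_mk] at h
  rw [show k * i + k = k + k * i by ring, h]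
  rw [Finset.sum_range_succ', Finset.sum_range_succ']
  simp only [Nat.choose_zero_right, one_mul, Nat.choose_one_right]
  have e : ∀ u ∈ range (n + 1), k.choose (u + 1 + 1) * (k * i).choose (n + 2 - (u + 1 + 1))
      = k.choose (u + 2) * (k * i).choose (n - u) := by
    intro u hu
    congr 2
    omega
  rw [Finset.sum_congr rfl e]
  norm_num
  omega

lemma key' (n J : ℕ) :
    Nf k (n + 2) (J + 1)
      = k * Nf k (n + 1) J
        + ∑ u ∈ range (n + 1), (k.choose (u + 2) : ℤ) * Nf k (n - u) J := by
  -- RHS = ∑_i (-1)^(J+i) C(J,i) (C(k(i+1),n+2) - C(ki,n+2))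
  have hrhs : k * Nf k (n + 1) J
        + ∑ u ∈ range (n + 1), (k.choose (u + 2) : ℤ) * Nf k (n - u) J
      = ∑ i ∈ range (J + 1), (-1) ^ (J + i) * (J.choose i : ℤ)
          * (((k * (i + 1)).choose (n + 2) : ℤ) - ((k * i).choose (n + 2) : ℤ)) := by
    rw [Nf, Finset.mul_sum]
    have hswap : ∑ u ∈ range (n + 1), (k.choose (u + 2) : ℤ) * Nf k (n - u) J
        = ∑ i ∈ range (J + 1), ∑ u ∈ range (n + 1),
            (k.choose (u + 2) : ℤ) * ((-1) ^ (J + i) * (J.choose i : ℤ) * ((k * i).choose (n - u) : ℤ)) := by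
      rw [Finset.sum_comm]
      apply Finset.sum_congr rfl
      intro u _
      rw [Nf, Finset.mul_sum]
    rw [hswap, ← Finset.sum_add_distrib]
    apply Finset.sum_congr rfl
    intro i _
    have hv : ((k * (i + 1)).choose (n + 2) : ℤ)
        = ((k * i).choose (n + 2) : ℤ) + k * ((k * i).choose (n + 1) : ℤ)
          + ∑ u ∈ range (n + 1), (k.choose (u + 2) : ℤ) * ((k * i).choose (n - u) : ℤ) := by
      have := vander_peel k i n
      have h2 : k * (i + 1) = k * i + k := by ring
      rw [h2]
      exact_mod_cast this
    rw [hv]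
    have hS : ∑ u ∈ range (n + 1), (k.choose (u + 2) : ℤ)
          * ((-1) ^ (J + i) * (J.choose i : ℤ) * ((k * i).choose (n - u) : ℤ))
        = (-1) ^ (J + i) * (J.choose i : ℤ)
          * ∑ u ∈ range (n + 1), (k.choose (u + 2) : ℤ) * ((k * i).choose (n - u) : ℤ) := by
      rw [Finset.mul_sum]
      exact Finset.sum_congr rfl (fun u _ => by ring)
    rw [hS]
    ring
  rw [hrhs]
  -- now prove LHS equals that sum
  rw [Nf, Finset.sum_range_succ']
  have h0 : (-1 : ℤ) ^ (J + 1 + 0) * (((J + 1).choose 0 : ℕ) : ℤ) * (((k * 0).choose (n + 2) : ℕ) : ℤ) = 0 := by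
    simp
  rw [h0, add_zero]
  have hsplit : ∀ i ∈ range (J + 1),
      (-1 : ℤ) ^ (J + 1 + (i + 1)) * (((J + 1).choose (i + 1) : ℕ) : ℤ) * (((k * (i + 1)).choose (n + 2) : ℕ) : ℤ)
        = (-1) ^ (J + i) * (J.choose i : ℤ) * ((k * (i + 1)).choose (n + 2) : ℤ)
          + (-1) ^ (J + i) * (J.choose (i + 1) : ℤ) * ((k * (i + 1)).choose (n + 2) : ℤ) := by
    intro i _
    have hsgn : (-1 : ℤ) ^ (J + 1 + (i + 1)) = (-1) ^ (J + i) := by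
      apply neg_one_pow_congr
      omega
    rw [hsgn, Nat.choose_succ_succ J i]
    push_cast
    ring
  rw [Finset.sum_congr rfl hsplit, Finset.sum_add_distrib]
  have hsub : ∑ i ∈ range (J + 1), (-1 : ℤ) ^ (J + i) * (J.choose i : ℤ)
        * (((k * (i + 1)).choose (n + 2) : ℤ) - ((k * i).choose (n + 2) : ℤ))
      = ∑ i ∈ range (J + 1), (-1 : ℤ) ^ (J + i) * (J.choose i : ℤ) * ((k * (i + 1)).choose (n + 2) : ℤ)
        - ∑ i ∈ range (J + 1), (-1 : ℤ) ^ (J + i) * (J.choose i : ℤ) * ((k * i).choose (n + 2) : ℤ) := by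
    rw [← Finset.sum_sub_distrib]
    exact Finset.sum_congr rfl (fun i _ => by ring)
  rw [hsub]
  have hpeel : ∑ i ∈ range (J + 1), (-1 : ℤ) ^ (J + i) * (J.choose i : ℤ) * ((k * i).choose (n + 2) : ℤ)
      = ∑ i ∈ range J, (-1 : ℤ) ^ (J + (i + 1)) * (J.choose (i + 1) : ℤ) * ((k * (i + 1)).choose (n + 2) : ℤ) := by
    rw [Finset.sum_range_succ']
    simp
  have hext : ∑ i ∈ range (J + 1), (-1 : ℤ) ^ (J + i) * (J.choose (i + 1) : ℤ) * ((k * (i + 1)).choose (n + 2) : ℤ)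
      = ∑ i ∈ range J, (-1 : ℤ) ^ (J + i) * (J.choose (i + 1) : ℤ) * ((k * (i + 1)).choose (n + 2) : ℤ) := by
    rw [Finset.sum_range_succ]
    simp
  rw [hpeel, hext, sub_eq_add_neg]
  congr 1
  rw [← Finset.sum_neg_distrib]
  apply Finset.sum_congr rfl
  intro i _
  have hsgn : (-1 : ℤ) ^ (J + (i + 1)) = -(-1 : ℤ) ^ (J + i) := by
    rw [← add_assoc, pow_succ]
    ring
  rw [hsgn]
  ring

end key


section vandiag

variable (k : ℕ)

lemma van : ∀ n j : ℕ, n < j → Nf k n j = 0 := by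
  intro n
  induction n using Nat.strong_induction_on with
  | _ n ih =>
    match n with
    | 0 =>
      intro j hj
      obtain ⟨J, rfl⟩ : ∃ J, j = J + 1 := ⟨j - 1, by omega⟩
      exact Nf_zero_left k J
    | 1 =>
      intro j hj
      obtain ⟨J, rfl⟩ : ∃ J, j = J + 2 := ⟨j - 2, by omega⟩
      exact Nf_one_left k J
    | (n + 2) =>
      intro j hj
      obtain ⟨J, rfl⟩ : ∃ J, j = J + 1 := ⟨j - 1, by omega⟩
      rw [key' k n J]
      rw [ih (n + 1) (by omega) J (by omega)]
      have hz : ∀ u ∈ range (n + 1), (k.choose (u + 2) : ℤ) * Nf k (n - u) J = 0 := by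
        intro u hu
        rw [ih (n - u) (by omega) J (by omega), mul_zero]
      rw [Finset.sum_congr rfl hz]
      simp

lemma Nf_diag : ∀ N : ℕ, Nf k N N = (k : ℤ) ^ N := by
  intro N
  induction N using Nat.strong_induction_on with
  | _ N ih =>
    match N with
    | 0 => rw [Nf_zero_zero]; rfl
    | 1 => rw [Nf_diag_one]; ring
    | (n + 2) =>
      rw [key' k n (n + 1), ih (n + 1) (by omega)]
      have hz : ∀ u ∈ range (n + 1), (k.choose (u + 2) : ℤ) * Nf k (n - u) (n + 1) = 0 := by
        intro u hu
        rw [van k (n - u) (n + 1) (by omega), mul_zero]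
      rw [Finset.sum_congr rfl hz]
      simp
      ring

end vandiag


section closedforms

variable (k : ℕ)

lemma Dv_m0 (N : ℕ) : Dv k N 0 = (2 * k) ^ N := by
  rw [Dv]
  simp only [Nat.choose_zero_right]
  rw [Finset.sum_const, Finset.card_univ, smul_eq_mul, mul_one]
  simp [Fintype.card_fun]

/-- closed form for `Wv` (for `m ≤ n`) and for `Dv` (length `n+1`). -/
lemma closed_forms : ∀ n : ℕ,
    (∀ r m : ℕ, m ≤ n → (Wv k r n m : ℤ)
        = 2 ^ (n - m + 1) * ∑ u ∈ range (min n m + 1),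
            (k.choose (r + 1 + u) : ℤ) * Nf k (n - u) (n - m))
    ∧ (∀ m : ℕ, (Dv k (n + 1) m : ℤ) = 2 ^ (n + 1 - m) * Nf k (n + 1) (n + 1 - m)) := by
  intro n
  induction n with
  | zero =>
    constructor
    · intro r m hm
      interval_cases m
      have h := Wv_zero k r 0
      rw [Nat.choose_zero_right, mul_one] at h
      have hc : (Wv k r 0 0 : ℤ) = 2 * (k.choose (r + 1) : ℤ) := by
        exact_mod_cast congrArg (fun x : ℕ => (x : ℤ)) h
      rw [hc, show min 0 0 = 0 from rfl, Finset.sum_range_one, Nf_zero_zero]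
      norm_num
    · intro m
      match m with
      | 0 =>
        have h := Dv_one k 0
        rw [Nat.choose_zero_right, mul_one] at h
        rw [h]
        rw [show (1:ℕ) - 0 = 1 from rfl, Nf_diag_one]
        push_cast
        ring
      | (m' + 1) =>
        have h := Dv_one k (m' + 1)
        rw [Nat.choose_zero_succ, mul_zero] at h
        rw [h]
        rw [show (1:ℕ) - (m' + 1) = 0 by omega, Nf_pos_zero]
        simp
  | succ n ih =>
    obtain ⟨ihW, ihD⟩ := ih
    constructor
    · -- CW (n+1)
      intro r m hm
      match m with
      | 0 =>
        have h := W_succ_zero k r n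
        have hc : (Wv k r (n + 1) 0 : ℤ) = 2 * (k.choose (r + 1) : ℤ) * (Dv k (n + 1) 0 : ℤ) := by
          exact_mod_cast congrArg (fun x : ℕ => (x : ℤ)) h
        rw [hc, ihD 0]
        rw [show min (n + 1) 0 = 0 from by omega]
        rw [Finset.sum_range_one]
        rw [show n + 1 - 0 = n + 1 from rfl, show r + 1 + 0 = r + 1 from rfl]
        ring
      | (m' + 1) =>
        have hm' : m' ≤ n := by omega
        have h := W_succ k r n m'
        have hc : (Wv k r (n + 1) (m' + 1) : ℤ)
            = 2 * (k.choose (r + 1) : ℤ) * (Dv k (n + 1) (m' + 1) : ℤ) + (Wv k (r + 1) n m' : ℤ) := by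
          exact_mod_cast congrArg (fun x : ℕ => (x : ℤ)) h
        rw [hc, ihD (m' + 1), ihW (r + 1) m' hm']
        rw [show n + 1 - (m' + 1) = n - m' from by omega]
        rw [show min (n + 1) (m' + 1) = m' + 1 from by omega]
        rw [show min n m' = m' from by omega]
        have hgoal : ∑ u ∈ range (m' + 1 + 1), (k.choose (r + 1 + u) : ℤ) * Nf k (n + 1 - u) (n - m')
            = (∑ u ∈ range (m' + 1), (k.choose (r + 1 + 1 + u) : ℤ) * Nf k (n - u) (n - m'))
              + (k.choose (r + 1) : ℤ) * Nf k (n + 1) (n - m') := by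
          rw [Finset.sum_range_succ']
          congr 1
          apply Finset.sum_congr rfl
          intro u hu
          rw [show r + 1 + (u + 1) = r + 1 + 1 + u from by omega,
            show n + 1 - (u + 1) = n - u from by omega]
        rw [hgoal]
        ring
    · -- CD (n+2)
      intro m
      match m with
      | 0 =>
        rw [show (Dv k (n + 2) 0 : ℤ) = ((2 * k) ^ (n + 2) : ℕ) from by rw [Dv_m0]]
        rw [show n + 2 - 0 = n + 2 from rfl, Nf_diag]
        push_cast
        ring
      | (m' + 1) =>
        by_cases hm' : m' ≤ n
        · have h := D_succ k n m'
          have hc : (Dv k (n + 2) (m' + 1) : ℤ)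
              = 2 * (k : ℤ) * (Dv k (n + 1) (m' + 1) : ℤ) + (Wv k 1 n m' : ℤ) := by
            exact_mod_cast congrArg (fun x : ℕ => (x : ℤ)) h
          rw [hc, ihD (m' + 1), ihW 1 m' hm']
          rw [show n + 1 - (m' + 1) = n - m' from by omega]
          rw [show n + 2 - (m' + 1) = (n - m') + 1 from by omega]
          rw [show min n m' = m' from by omega]
          rw [key' k n (n - m')]
          have htr : ∑ u ∈ range (n + 1), (k.choose (u + 2) : ℤ) * Nf k (n - u) (n - m')
              = ∑ u ∈ range (m' + 1), (k.choose (u + 2) : ℤ) * Nf k (n - u) (n - m') := by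
            symm
            apply Finset.sum_subset
            · intro u hu
              rw [Finset.mem_range] at *
              omega
            · intro u hu1 hu2
              rw [Finset.mem_range] at *
              rw [van k (n - u) (n - m') (by omega), mul_zero]
          rw [htr]
          have he : ∀ u ∈ range (m' + 1),
              (k.choose (u + 2) : ℤ) * Nf k (n - u) (n - m')
                = (k.choose (1 + 1 + u) : ℤ) * Nf k (n - u) (n - m') := by
            intro u _
            rw [show u + 2 = 1 + 1 + u from by omega]
          rw [Finset.sum_congr rfl he]
          ring
        · -- m' ≥ n + 1 : both sides vanish
          have h := D_vanish k (n + 1) (m' + 1) (by omega)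
          rw [show (Dv k (n + 2) (m' + 1) : ℤ) = ((0 : ℕ) : ℤ) from by rw [← h]]
          rw [show n + 2 - (m' + 1) = 0 from by omega, Nf_pos_zero]
          simp

end closedforms


section assembly

lemma orth (n p d : ℕ) (hd : d ≤ n) :
    ∑ m ∈ range (n + 1), (-1 : ℤ) ^ (m + p) * (m.choose p : ℤ) * (d.choose m : ℤ)
      = if d = p then 1 else 0 := by
  have hterm : ∀ m ∈ range (n + 1), (-1 : ℤ) ^ (m + p) * (m.choose p : ℤ) * (d.choose m : ℤ)
      = if p ≤ m then (fun m => (-1 : ℤ) ^ (m + p)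
          * ((d.choose p : ℤ) * (((d - p).choose (m - p) : ℕ) : ℤ))) m else 0 := by
    intro m _
    by_cases hpm : p ≤ m
    · rw [if_pos hpm]
      have hn : d.choose m * m.choose p = d.choose p * (d - p).choose (m - p) := by
        by_cases hmd : m ≤ d
        · exact Nat.choose_mul hpm
        · by_cases hdp2 : d < p
          · rw [Nat.choose_eq_zero_of_lt (by omega : d < m), Nat.choose_eq_zero_of_lt hdp2]
            simp
          · rw [Nat.choose_eq_zero_of_lt (by omega : d < m),
              Nat.choose_eq_zero_of_lt (by omega : d - p < m - p)]
            simp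
      have h2 : (d.choose m : ℤ) * (m.choose p : ℤ)
          = (d.choose p : ℤ) * (((d - p).choose (m - p) : ℕ) : ℤ) := by exact_mod_cast hn
      calc (-1 : ℤ) ^ (m + p) * (m.choose p : ℤ) * (d.choose m : ℤ)
          = (-1 : ℤ) ^ (m + p) * ((d.choose m : ℤ) * (m.choose p : ℤ)) := by ring
        _ = _ := by rw [h2]
    · rw [if_neg hpm, Nat.choose_eq_zero_of_lt (by omega)]
      simp
  rw [Finset.sum_congr rfl hterm, sum_range_shift _ (n + 1) p]
  have h3 : ∀ u ∈ range (n + 1 - p), (-1 : ℤ) ^ (p + u + p)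
        * ((d.choose p : ℤ) * (((d - p).choose (p + u - p) : ℕ) : ℤ))
      = (d.choose p : ℤ) * ((-1 : ℤ) ^ u * (((d - p).choose u : ℕ) : ℤ)) := by
    intro u _
    rw [show p + u - p = u from by omega, neg_one_pow_congr (by omega : (p + u + p) % 2 = u % 2)]
    ring
  rw [Finset.sum_congr rfl h3, ← Finset.mul_sum]
  by_cases hdp : d = p
  · subst hdp
    rw [if_pos rfl, Nat.choose_self, Nat.sub_self]
    have h1 : ∑ u ∈ range (n + 1 - d), (-1 : ℤ) ^ u * ((Nat.choose 0 u : ℕ) : ℤ) = 1 := by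
      rw [Finset.sum_eq_single_of_mem 0 (Finset.mem_range.2 (by omega))]
      · simp
      · intro u _ hu
        obtain ⟨u', rfl⟩ : ∃ u', u = u' + 1 := ⟨u - 1, by omega⟩
        simp
    rw [h1]
    simp
  · rw [if_neg hdp]
    by_cases hlt : d < p
    · rw [Nat.choose_eq_zero_of_lt hlt]
      simp
    · -- p < d
      have hsub : ∑ u ∈ range (n + 1 - p), (-1 : ℤ) ^ u * (((d - p).choose u : ℕ) : ℤ)
          = ∑ u ∈ range ((d - p) + 1), (-1 : ℤ) ^ u * (((d - p).choose u : ℕ) : ℤ) := by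
        symm
        apply Finset.sum_subset
        · intro u hu
          rw [Finset.mem_range] at *
          omega
        · intro u _ hu2
          rw [Finset.mem_range] at hu2
          rw [Nat.choose_eq_zero_of_lt (by omega)]
          simp
      rw [hsub, Int.alternating_sum_range_choose_of_ne (by omega : d - p ≠ 0)]
      simp

lemma descCount_nil (X : ℕ → Prop) [DecidablePred X] {K : ℕ} (w : Fin 0 → Fin K) :
    descCount X w = 0 := by
  rw [descCount_eq_sum]
  simp

lemma main_count (k n p : ℕ) :
    ((Finset.univ.filter (fun w : Fin n → Fin (2 * k) =>
          descCount (fun x => x % 2 = 1) w = p)).card : ℤ)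
      = ∑ j ∈ Finset.range (n + 1), ∑ i ∈ Finset.range (j + 1),
          (-1 : ℤ) ^ (n + p + i) *
            ((2 ^ j * j.choose i * (k * i).choose n * (n - j).choose p : ℕ) : ℤ) := by
  match n with
  | 0 =>
    rw [Finset.sum_range_one, Finset.sum_range_one]
    simp only [descCount_nil]
    by_cases hp : p = 0
    · subst hp
      rw [Finset.filter_true_of_mem (fun w _ => rfl)]
      rw [Finset.card_univ]
      simp
    · rw [Finset.filter_false_of_mem (fun w _ => by omega)]
      rw [show Nat.choose 0 p = 0 from Nat.choose_eq_zero_of_lt (by omega)]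
      simp
  | (n' + 1) =>
    set n := n' + 1 with hn
    rw [Finset.card_filter]
    push_cast
    have hterm : ∀ w ∈ (univ : Finset (Fin n → Fin (2 * k))),
        (if descCount (fun x => x % 2 = 1) w = p then (1 : ℤ) else 0)
          = ∑ m ∈ range (n + 1), (-1 : ℤ) ^ (m + p) * (m.choose p : ℤ)
              * ((descCount (fun x => x % 2 = 1) w).choose m : ℤ) := by
      intro w _
      rw [orth n p _ (le_trans (descCount_le _ w) (by omega))]
    rw [Finset.sum_congr rfl hterm, Finset.sum_comm]
    have hDm : ∀ m ∈ range (n + 1),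
        ∑ w : Fin n → Fin (2 * k), (-1 : ℤ) ^ (m + p) * (m.choose p : ℤ)
            * ((descCount (fun x => x % 2 = 1) w).choose m : ℤ)
          = (-1 : ℤ) ^ (m + p) * (m.choose p : ℤ) * (2 ^ (n - m) * Nf k n (n - m)) := by
      intro m _
      rw [← Finset.mul_sum]
      have : ∑ w : Fin n → Fin (2 * k), ((descCount (fun x => x % 2 = 1) w).choose m : ℤ)
          = (Dv k n m : ℤ) := by
        rw [Dv]
        push_cast
        rfl
      rw [this, (closed_forms k n').2 m]
    rw [Finset.sum_congr rfl hDm]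
    rw [← Finset.sum_range_reflect]
    apply Finset.sum_congr rfl
    intro j hj
    rw [Finset.mem_range] at hj
    rw [show n + 1 - 1 - j = n - j from by omega]

    rw [show n - (n - j) = j from by omega]
    rw [Nf, Finset.mul_sum, Finset.mul_sum]
    apply Finset.sum_congr rfl
    intro i _
    rw [neg_one_pow_congr (by omega : (n - j + p) % 2 = (n + p + j) % 2)]
    have hs : (-1 : ℤ) ^ (n + p + j) * (-1 : ℤ) ^ (j + i) = (-1 : ℤ) ^ (n + p + i) := by
      rw [← pow_add]
      exact neg_one_pow_congr (by omega)
    linear_combination (((n - j).choose p : ℤ) * 2 ^ j * (j.choose i : ℤ) * ((k * i).choose n : ℤ)) * hs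

end assembly


section part2

lemma rise_rev (k n : ℕ) (w : Fin n → Fin (2 * k)) :
    riseCount (fun x => 0 < x ∧ x % 2 = 0) (fun i => (w i).rev)
      = descCount (fun x => x % 2 = 1) w := by
  rw [riseCount, descCount]
  congr 1
  apply Finset.filter_congr
  intro q _
  have h1 := (w q.1).isLt
  have h2 := (w q.2).isLt
  rw [Fin.val_rev, Fin.val_rev]
  constructor
  · rintro ⟨hq, hlt, hX⟩
    exact ⟨hq, by omega, by omega⟩
  · rintro ⟨hq, hlt, hX⟩
    exact ⟨hq, by omega, by omega, by omega⟩

lemma card_rise_eq (k n p : ℕ) :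
    (Finset.univ.filter (fun w : Fin n → Fin (2 * k) =>
        riseCount (fun x => 0 < x ∧ x % 2 = 0) w = p)).card
      = (Finset.univ.filter (fun w : Fin n → Fin (2 * k) =>
        descCount (fun x => x % 2 = 1) w = p)).card := by
  apply Finset.card_bij' (i := fun (w : Fin n → Fin (2 * k)) _ => fun i => (w i).rev)
    (j := fun (w : Fin n → Fin (2 * k)) _ => fun i => (w i).rev)
  · intro w hw
    rw [Finset.mem_filter] at *
    refine ⟨Finset.mem_univ _, ?_⟩
    have := rise_rev k n (fun i => (w i).rev)
    simp only [Fin.rev_rev] at this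
    rw [← this]
    exact hw.2
  · intro w hw
    rw [Finset.mem_filter] at *
    refine ⟨Finset.mem_univ _, ?_⟩
    rw [rise_rev]
    exact hw.2
  · intro w _
    funext i
    exact Fin.rev_rev _
  · intro w _
    funext i
    exact Fin.rev_rev _

end part2

end S11

/- `O = {1,3,5,…}` is encoded as `fun x => x % 2 = 1` and `E = {2,4,6,…}` as
`fun x => 0 < x ∧ x % 2 = 0`. -/
theorem stmt_11 (k n p : ℕ) (hk : 1 ≤ k) :
    ((Finset.univ.filter (fun w : Fin n → Fin (2 * k) =>
          descCount (fun x => x % 2 = 1) w = p)).card : ℤ)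
        = ∑ j ∈ Finset.range (n + 1), ∑ i ∈ Finset.range (j + 1),
            (-1 : ℤ) ^ (n + p + i) *
              ((2 ^ j * j.choose i * (k * i).choose n * (n - j).choose p : ℕ) : ℤ)
      ∧ ((Finset.univ.filter (fun w : Fin n → Fin (2 * k) =>
            riseCount (fun x => 0 < x ∧ x % 2 = 0) w = p)).card : ℤ)
        = ∑ j ∈ Finset.range (n + 1), ∑ i ∈ Finset.range (j + 1),
            (-1 : ℤ) ^ (n + p + i) *
              ((2 ^ j * j.choose i * (k * i).choose n * (n - j).choose p : ℕ) : ℤ) := by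
  constructor
  · exact S11.main_count k n p
  · rw [S11.card_rise_eq k n p]
    exact S11.main_count k n p
end

section
/- Let k ≥ 0 and n, p ≥ 0. The number of words π ∈ [2k+1]^n with des_E(π) = p, where E is the set of even positive integers (equivalently, the number of words π ∈ [2k+1]^n with ris_E(π) = p), equals Σ_{m=0}^{n} Σ_{j=0}^{m} Σ_{i=0}^{j} (−1)^{n+p+j} · 2^{m−i} · C(m, j) · C(j, i) · C(k·j, n−i) · C(n−m, p). -/
open Finset

namespace Stmt13

abbrev E : ℕ → Prop := fun x => 0 < x ∧ x % 2 = 0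

lemma Epred (x : ℕ) : E (x + 1) ↔ x % 2 = 1 := by
  simp only [E]; omega

/-- coefficient of `z^r` in `(2+z)(1+z)^k - 2`. -/
def a (k : ℕ) : ℕ → ℕ
  | 0 => 0
  | r + 1 => 2 * k.choose (r + 1) + k.choose r

/-- coefficient of `z^n` in `((2+z)(1+z)^k - 2)^m`. -/
def c (k : ℕ) : ℕ → ℕ → ℕ
  | 0, n => if n = 0 then 1 else 0
  | m + 1, n => ∑ r ∈ Finset.range (n + 1), a k r * c k m (n - r)

/-- number of "blocks" of length `r` starting with letter of index `v`. -/
def b : ℕ → ℕ → ℕ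
  | 0, _ => 0
  | 1, _ => 1
  | r + 2, v => if v % 2 = 1 then 2 * ((v - 1) / 2).choose (r + 1) + ((v - 1) / 2).choose r else 0

lemma c_eq_zero (k : ℕ) : ∀ m n, n < m → c k m n = 0 := by
  intro m
  induction m with
  | zero => intro n hn; omega
  | succ m ih =>
    intro n hn
    rw [c]
    apply Finset.sum_eq_zero
    intro r hr
    have hr' := Finset.mem_range.1 hr
    match r with
    | 0 => simp [a]
    | r + 1 =>
      rw [ih (n - (r + 1)) (by omega), mul_zero]

lemma c_diag (k m : ℕ) : c k m m = (2 * k + 1) ^ m := by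
  induction m with
  | zero => simp [c]
  | succ m ih =>
    rw [c]
    rw [Finset.sum_eq_single 1]
    · have : (m + 1) - 1 = m := by omega
      rw [this, ih, a]
      simp [pow_succ]; ring
    · intro r hr hne
      have hr' := Finset.mem_range.1 hr
      match r with
      | 0 => simp [a]
      | r + 2 => rw [c_eq_zero k m (m + 1 - (r + 2)) (by omega), mul_zero]
    · intro h; exact absurd (Finset.mem_range.2 (by omega)) h

lemma sum_b (t r : ℕ) :
    ∑ v ∈ Finset.range (2 * t + 1), b (r + 2) v
      = 2 * t.choose (r + 2) + t.choose (r + 1) := by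
  induction t with
  | zero => simp [b]
  | succ t ih =>
    have h1 : 2 * (t + 1) + 1 = (2 * t + 1) + 1 + 1 := by omega
    rw [h1, Finset.sum_range_succ, Finset.sum_range_succ, ih]
    have hb1 : b (r + 2) (2 * t + 1) = 2 * t.choose (r + 1) + t.choose r := by
      rw [b, if_pos (by omega)]
      have : (2 * t + 1 - 1) / 2 = t := by omega
      rw [this]
    have hb2 : b (r + 2) (2 * t + 1 + 1) = 0 := by
      rw [b, if_neg (by omega)]
    rw [hb1, hb2, Nat.choose_succ_succ t (r + 1), Nat.choose_succ_succ t r]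
    ring

lemma sum_b_eq_a (k r : ℕ) : ∑ v ∈ Finset.range (2 * k + 1), b (r + 1) v = a k (r + 1) := by
  match r with
  | 0 => simp [b, a]
  | r + 1 => rw [sum_b, a]

lemma b_rec (r v : ℕ) (hr : 1 ≤ r) :
    b (r + 1) v = if v % 2 = 1 then ∑ u ∈ Finset.range v, b r u else 0 := by
  match r, hr with
  | 1, _ =>
    by_cases h : v % 2 = 1
    · rw [if_pos h]
      show b 2 v = _
      rw [b, if_pos h]
      simp only [b]
      rw [Finset.sum_const, Finset.card_range, smul_eq_mul, mul_one]
      simp [Nat.choose_one_right]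
      omega
    · rw [if_neg h]; show b 2 v = 0; rw [b, if_neg h]
  | r + 2, _ =>
    by_cases h : v % 2 = 1
    · rw [if_pos h]
      obtain ⟨t, rfl⟩ : ∃ t, v = 2 * t + 1 := ⟨v / 2, by omega⟩
      rw [sum_b]
      show b (r + 3) (2 * t + 1) = _
      rw [b, if_pos (by omega)]
      have : (2 * t + 1 - 1) / 2 = t := by omega
      rw [this]
    · rw [if_neg h]; show b (r + 3) v = 0; rw [b, if_neg h]



/-- descent indicator at position `i`. -/
def dind {K n : ℕ} (w : Fin n → Fin K) (i : ℕ) : ℕ :=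
  if h : i + 1 < n then
    (if (w ⟨i + 1, h⟩ : ℕ) < (w ⟨i, by omega⟩ : ℕ) ∧ (w ⟨i, by omega⟩ : ℕ) % 2 = 1
      then 1 else 0)
  else 0

lemma dind_le_one {K n : ℕ} (w : Fin n → Fin K) (i : ℕ) : dind w i ≤ 1 := by
  unfold dind
  split
  · split <;> omega
  · omega

lemma descCount_eq_sum {K n : ℕ} (w : Fin n → Fin K) :
    descCount E w = ∑ i ∈ Finset.range n, dind w i := by
  rw [descCount, Finset.card_filter, ← Fin.sum_univ_eq_sum_range (fun i => dind w i) n,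
    Fintype.sum_prod_type]
  dsimp only
  refine Finset.sum_congr rfl fun i _ => ?_
  unfold dind
  split
  case isTrue h =>
    rw [Finset.sum_eq_single (⟨(i : ℕ) + 1, h⟩ : Fin n)]
    · have h1 : ((i : ℕ) + 1 = ((⟨(i : ℕ) + 1, h⟩ : Fin n) : ℕ)) := rfl
      have h2 : (⟨(i : ℕ), by omega⟩ : Fin n) = i := rfl
      rw [h2]
      by_cases hc : (w ⟨(i : ℕ) + 1, h⟩ : ℕ) < (w i : ℕ) ∧ (w i : ℕ) % 2 = 1
      · rw [if_pos hc, if_pos ⟨rfl, hc.1, Nat.succ_pos _, by omega⟩]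
      · rw [if_neg hc, if_neg]
        rintro ⟨-, hlt, hpos, hmod⟩
        exact hc ⟨hlt, by omega⟩
    · intro j _ hj
      rw [if_neg]
      rintro ⟨hj1, -⟩
      exact hj (Fin.ext hj1.symm)
    · intro hmem; exact absurd (Finset.mem_univ _) hmem
  case isFalse h =>
    apply Finset.sum_eq_zero
    intro j _
    rw [if_neg]
    rintro ⟨hj1, -⟩
    exact h (hj1 ▸ j.isLt)

lemma cons_val {K n : ℕ} (v : Fin K) (w : Fin n → Fin K) (i : ℕ) (h : i + 1 < n + 1) :
    (Fin.cons v w : Fin (n + 1) → Fin K) ⟨i + 1, h⟩ = w ⟨i, by omega⟩ := by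
  have heq : (⟨i + 1, h⟩ : Fin (n + 1)) = Fin.succ ⟨i, by omega⟩ := rfl
  rw [heq, Fin.cons_succ]

lemma dind_cons_succ {K n : ℕ} (v : Fin K) (w : Fin n → Fin K) (i : ℕ) :
    dind (Fin.cons v w) (i + 1) = dind w i := by
  unfold dind
  by_cases h : i + 1 < n
  · rw [dif_pos (by omega : i + 1 + 1 < n + 1), dif_pos h]
    rw [cons_val, cons_val]
  · rw [dif_neg (by omega), dif_neg h]

/-- the head indicator. -/
def hd {K n : ℕ} (v : Fin K) (w : Fin n → Fin K) : ℕ :=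
  if h : 0 < n then
    (if (w ⟨0, h⟩ : ℕ) < (v : ℕ) ∧ (v : ℕ) % 2 = 1 then 1 else 0)
  else 0

lemma dind_cons_zero {K n : ℕ} (v : Fin K) (w : Fin n → Fin K) :
    dind (Fin.cons v w) 0 = hd v w := by
  unfold dind hd
  by_cases h : 0 < n
  · rw [dif_pos (by omega : 0 + 1 < n + 1), dif_pos h]
    rw [cons_val]
    rfl
  · rw [dif_neg (by omega), dif_neg h]

lemma descCount_cons {K n : ℕ} (v : Fin K) (w : Fin n → Fin K) :
    descCount E (Fin.cons v w) = descCount E w + hd v w := by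
  rw [descCount_eq_sum, descCount_eq_sum, Finset.sum_range_succ']
  simp only [dind_cons_succ, dind_cons_zero]

lemma descCount_le {K n : ℕ} (w : Fin n → Fin K) : descCount E w ≤ n := by
  rw [descCount_eq_sum]
  calc ∑ i ∈ Finset.range n, dind w i ≤ ∑ _i ∈ Finset.range n, 1 :=
        Finset.sum_le_sum fun i _ => dind_le_one w i
    _ = n := by simp

lemma descCount_lt {K n : ℕ} (w : Fin (n + 1) → Fin K) : descCount E w ≤ n := by
  rw [descCount_eq_sum, Finset.sum_range_succ]
  have hlast : dind w n = 0 := by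
    unfold dind
    rw [dif_neg (by omega)]
  rw [hlast, add_zero]
  calc ∑ i ∈ Finset.range n, dind w i ≤ ∑ _i ∈ Finset.range n, 1 :=
        Finset.sum_le_sum fun i _ => dind_le_one w i
    _ = n := by simp

lemma sum_univ_fun_succ {α M : Type*} [AddCommMonoid M] [Fintype α] [DecidableEq α] (n : ℕ)
    (f : (Fin (n + 1) → α) → M) :
    ∑ w : Fin (n + 1) → α, f w = ∑ v : α, ∑ w : Fin n → α, f (Fin.cons v w) := by
  rw [← (Fin.consEquiv fun _ => α).sum_comp f, Fintype.sum_prod_type]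
  rfl



def Wv (k n q : ℕ) (v : Fin (2 * k + 1)) : ℕ :=
  ∑ w : Fin n → Fin (2 * k + 1), (descCount E (Fin.cons v w)).choose q

lemma sum_fin_lt {K : ℕ} (v : Fin K) (g : ℕ → ℕ) :
    (∑ u : Fin K, if (u : ℕ) < (v : ℕ) then g (u : ℕ) else 0)
      = ∑ x ∈ Finset.range (v : ℕ), g x := by
  rw [Fin.sum_univ_eq_sum_range (fun x => if x < (v : ℕ) then g x else 0) K]
  have hsub : Finset.range (v : ℕ) = (Finset.range K).filter (fun x => x < (v : ℕ)) := by
    ext x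
    have := v.isLt
    simp only [Finset.mem_range, Finset.mem_filter]
    omega
  rw [hsub, Finset.sum_filter]

lemma hd_cons {K n : ℕ} (v u : Fin K) (w : Fin n → Fin K) :
    hd v (Fin.cons u w) = if (u : ℕ) < (v : ℕ) ∧ (v : ℕ) % 2 = 1 then 1 else 0 := by
  rw [hd, dif_pos (Nat.succ_pos n)]
  have h0 : (Fin.cons u w : Fin (n + 1) → Fin K) ⟨0, Nat.succ_pos n⟩ = u := rfl
  rw [h0]

lemma Wv_succ (k n q : ℕ) (v : Fin (2 * k + 1)) :
    Wv k (n + 1) q v = ∑ u : Fin (2 * k + 1), ∑ w : Fin n → Fin (2 * k + 1),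
      (descCount E (Fin.cons u w)
        + (if (u : ℕ) < (v : ℕ) ∧ (v : ℕ) % 2 = 1 then 1 else 0)).choose q := by
  rw [Wv, sum_univ_fun_succ]
  refine Finset.sum_congr rfl fun u _ => Finset.sum_congr rfl fun w _ => ?_
  rw [descCount_cons v (Fin.cons u w), hd_cons]

lemma choose_add_ite (d q : ℕ) (C : Prop) [Decidable C] :
    (d + if C then 1 else 0).choose (q + 1)
      = d.choose (q + 1) + if C then d.choose q else 0 := by
  split
  · rw [Nat.choose_succ_succ, Nat.add_comm]
  · simp

lemma Wv_high (k n q : ℕ) (hq : n + 1 ≤ q) (v : Fin (2 * k + 1)) : Wv k n q v = 0 := by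
  rw [Wv]
  apply Finset.sum_eq_zero
  intro w _
  exact Nat.choose_eq_zero_of_lt (lt_of_le_of_lt (descCount_lt _) (by omega))

lemma Wv_q0 (k n : ℕ) (v : Fin (2 * k + 1)) : Wv k n 0 v = (2 * k + 1) ^ n := by
  rw [Wv]
  simp only [Nat.choose_zero_right]
  rw [Finset.sum_const, Finset.card_univ, Fintype.card_fun, smul_eq_mul, mul_one]
  simp

lemma c_succ_Icc (k m N : ℕ) :
    c k (m + 1) N = ∑ r ∈ Finset.Icc 1 N, a k r * c k m (N - r) := by
  rw [c, Finset.range_eq_Ico,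
    ← Finset.sum_Ico_consecutive _ (Nat.zero_le 1) (by omega : 1 ≤ N + 1)]
  have h0 : ∑ r ∈ Finset.Ico 0 1, a k r * c k m (N - r) = 0 := by simp [a]
  rw [h0, zero_add, Finset.Ico_add_one_right_eq_Icc]

lemma sum_Icc_shift (f : ℕ → ℕ) (x y : ℕ) :
    ∑ r ∈ Finset.Icc (x + 1) (y + 1), f r = ∑ r ∈ Finset.Icc x y, f (r + 1) := by
  rw [← Finset.map_add_right_Icc x y 1, Finset.sum_map]
  rfl

lemma sum_fin_b (k r : ℕ) (hr : 1 ≤ r) :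
    ∑ u : Fin (2 * k + 1), b r (u : ℕ) = a k r := by
  rw [Fin.sum_univ_eq_sum_range (fun x => b r x) (2 * k + 1)]
  match r, hr with
  | r + 1, _ => exact sum_b_eq_a k r

lemma main_v (k : ℕ) : ∀ n m q : ℕ, ∀ v : Fin (2 * k + 1), n = m + q →
    Wv k n q v = ∑ r ∈ Finset.Icc 1 (n + 1), c k m (n + 1 - r) * b r (v : ℕ) := by
  intro n
  induction n with
  | zero =>
    intro m q v h
    obtain ⟨rfl, rfl⟩ : m = 0 ∧ q = 0 := by omega
    rw [Wv_q0, pow_zero]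
    rw [show Finset.Icc 1 (0 + 1) = {1} from rfl, Finset.sum_singleton]
    rfl
  | succ n ih =>
    intro m q v h
    match q with
    | 0 =>
      obtain rfl : m = n + 1 := by omega
      rw [Wv_q0]
      rw [Finset.sum_eq_single 1]
      · rw [show n + 1 + 1 - 1 = n + 1 from rfl, c_diag,
          show b 1 (v : ℕ) = 1 from rfl, mul_one]
      · intro r hr hne
        have hr' := Finset.mem_Icc.1 hr
        rw [c_eq_zero k (n + 1) (n + 1 + 1 - r) (by omega), zero_mul]
      · intro habs; exact absurd (Finset.mem_Icc.2 (by omega)) habs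
    | q + 1 =>
      have hn : n = m + q := by omega
      rw [Wv_succ]
      have split1 : ∀ u : Fin (2 * k + 1),
          (∑ w : Fin n → Fin (2 * k + 1),
            (descCount E (Fin.cons u w)
              + (if (u : ℕ) < (v : ℕ) ∧ (v : ℕ) % 2 = 1 then 1 else 0)).choose (q + 1))
          = Wv k n (q + 1) u
            + (if (u : ℕ) < (v : ℕ) ∧ (v : ℕ) % 2 = 1 then Wv k n q u else 0) := by
        intro u
        simp only [choose_add_ite]
        rw [Finset.sum_add_distrib]
        congr 1
        by_cases hc : (u : ℕ) < (v : ℕ) ∧ (v : ℕ) % 2 = 1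
        · simp only [if_pos hc]; rfl
        · simp only [if_neg hc, Finset.sum_const_zero]
      rw [Finset.sum_congr rfl fun u _ => split1 u, Finset.sum_add_distrib]
      -- Term 1
      have hT1 : ∑ u : Fin (2 * k + 1), Wv k n (q + 1) u = c k m (n + 1) := by
        match m, hn with
        | 0, hn =>
          have : ∀ u : Fin (2 * k + 1), Wv k n (q + 1) u = 0 := fun u =>
            Wv_high k n (q + 1) (by omega) u
          simp only [this, Finset.sum_const_zero]
          rw [show c k 0 (n + 1) = 0 from by simp [c]]
        | m + 1, hn =>
          have hiu : ∀ u : Fin (2 * k + 1), Wv k n (q + 1) u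
              = ∑ r ∈ Finset.Icc 1 (n + 1), c k m (n + 1 - r) * b r (u : ℕ) :=
            fun u => ih m (q + 1) u (by omega)
          simp only [hiu]
          rw [Finset.sum_comm, c_succ_Icc]
          refine Finset.sum_congr rfl fun r hr => ?_
          rw [← Finset.mul_sum, sum_fin_b k r (Finset.mem_Icc.1 hr).1, mul_comm]
      rw [hT1]
      -- Term 2
      have hiu2 : ∀ u : Fin (2 * k + 1), Wv k n q u
          = ∑ r ∈ Finset.Icc 1 (n + 1), c k m (n + 1 - r) * b r (u : ℕ) :=
        fun u => ih m q u hn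
      have hT2 : (∑ u : Fin (2 * k + 1),
            if (u : ℕ) < (v : ℕ) ∧ (v : ℕ) % 2 = 1 then Wv k n q u else 0)
          = ∑ r ∈ Finset.Icc 2 (n + 2), c k m (n + 2 - r) * b r (v : ℕ) := by
        rw [show Finset.Icc 2 (n + 2) = Finset.Icc (1 + 1) ((n + 1) + 1) from rfl,
          sum_Icc_shift]
        by_cases hv : (v : ℕ) % 2 = 1
        · simp only [hv, and_true, hiu2]
          rw [sum_fin_lt v (fun x => ∑ r ∈ Finset.Icc 1 (n + 1), c k m (n + 1 - r) * b r x),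
            Finset.sum_comm]
          refine Finset.sum_congr rfl fun r hr => ?_
          rw [← Finset.mul_sum]
          have h1 : b (r + 1) (v : ℕ) = ∑ x ∈ Finset.range (v : ℕ), b r x := by
            rw [b_rec r (v : ℕ) (Finset.mem_Icc.1 hr).1, if_pos hv]
          rw [show n + 1 + 1 - (r + 1) = n + 1 - r from by omega, h1]
        · have hfalse : ∀ u : Fin (2 * k + 1),
              ¬((u : ℕ) < (v : ℕ) ∧ (v : ℕ) % 2 = 1) := fun u hc => hv hc.2
          rw [Finset.sum_eq_zero (fun u _ => if_neg (hfalse u))]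
          symm
          apply Finset.sum_eq_zero
          intro r hr
          have hr1 := (Finset.mem_Icc.1 hr).1
          rw [b_rec r (v : ℕ) hr1, if_neg hv, mul_zero]
      rw [hT2]
      -- assemble: RHS = term at 1 + Icc 2 (n+2)
      rw [show Finset.Icc 1 (n + 1 + 1) = insert 1 (Finset.Icc 2 (n + 2)) from by
        ext x; simp [Finset.mem_Icc, Finset.mem_insert]; omega]
      rw [Finset.sum_insert (by simp [Finset.mem_Icc])]
      rw [show n + 1 + 1 - 1 = n + 1 from rfl, show b 1 (v : ℕ) = 1 from rfl, mul_one]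

lemma mainW (k n q : ℕ) (h : q ≤ n) :
    (∑ w : Fin n → Fin (2 * k + 1), (descCount E w).choose q) = c k (n - q) n := by
  match n, h with
  | 0, h =>
    obtain rfl : q = 0 := by omega
    simp only [Nat.choose_zero_right]
    rw [Finset.sum_const, Finset.card_univ, Fintype.card_fun, smul_eq_mul, mul_one]
    simp [c]
  | Nat.succ n, h =>
    rw [sum_univ_fun_succ n (fun w => (descCount E w).choose q)]
    by_cases hq : q ≤ n
    · have hv : ∀ v : Fin (2 * k + 1),
          (∑ w : Fin n → Fin (2 * k + 1), (descCount E (Fin.cons v w)).choose q)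
            = ∑ r ∈ Finset.Icc 1 (n + 1), c k (n - q) (n + 1 - r) * b r (v : ℕ) :=
        fun v => main_v k n (n - q) q v (by omega)
    /-POS-/
      rw [Finset.sum_congr rfl fun v _ => hv v, Finset.sum_comm]
      rw [show n + 1 - q = (n - q) + 1 from by omega, c_succ_Icc]
      refine Finset.sum_congr rfl fun r hr => ?_
      rw [← Finset.mul_sum, sum_fin_b k r (Finset.mem_Icc.1 hr).1, mul_comm]
    · obtain rfl : q = n + 1 := by omega
      have hv : ∀ v : Fin (2 * k + 1),
          (∑ w : Fin n → Fin (2 * k + 1), (descCount E (Fin.cons v w)).choose (n + 1)) = 0 :=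
        fun v => Wv_high k n (n + 1) (le_refl _) v
      rw [Finset.sum_congr rfl fun v _ => hv v, Finset.sum_const_zero]
      rw [show n + 1 - (n + 1) = 0 from by omega]
      simp [c]

lemma inv_id (N d p : ℕ) (hdN : d ≤ N) :
    (∑ q ∈ Finset.range (N + 1),
        (-1 : ℤ) ^ (p + q) * (q.choose p : ℤ) * (d.choose q : ℤ))
      = if d = p then 1 else 0 := by
  by_cases hpd : p ≤ d
  · rw [← Finset.sum_subset
      (Finset.range_subset_range.2 (by omega : d + 1 ≤ N + 1))
      (fun q hq hq2 => by
        have h1 : d < q := by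
          have := Finset.mem_range.1 hq
          have h2 : ¬ q < d + 1 := fun hcon => hq2 (Finset.mem_range.2 hcon)
          omega
        rw [Nat.choose_eq_zero_of_lt h1, Nat.cast_zero, mul_zero])]
    rw [Finset.range_eq_Ico,
      ← Finset.sum_Ico_consecutive _ (Nat.zero_le p) (by omega : p ≤ d + 1)]
    have h1 : (∑ q ∈ Finset.Ico 0 p,
        (-1 : ℤ) ^ (p + q) * (q.choose p : ℤ) * (d.choose q : ℤ)) = 0 := by
      apply Finset.sum_eq_zero
      intro q hq
      have hqp : q < p := (Finset.mem_Ico.1 hq).2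
      rw [Nat.choose_eq_zero_of_lt hqp, Nat.cast_zero, mul_zero, zero_mul]
    rw [h1, zero_add, Finset.sum_Ico_eq_sum_range]
    have hterm : ∀ s ∈ Finset.range (d + 1 - p),
        (-1 : ℤ) ^ (p + (p + s)) * ((p + s).choose p : ℤ) * (d.choose (p + s) : ℤ)
          = (d.choose p : ℤ) * ((-1) ^ s * ((d - p).choose s : ℤ)) := by
      intro s hs
      have hs' : s ≤ d - p := by
        have := Finset.mem_range.1 hs
        omega
      have hsign : (-1 : ℤ) ^ (p + (p + s)) = (-1) ^ s := by
        rw [show p + (p + s) = 2 * p + s from by ring, pow_add, pow_mul]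
        norm_num
      have hch : d.choose (p + s) * (p + s).choose p = d.choose p * (d - p).choose s := by
        have := Nat.choose_mul (n := d) (show p ≤ p + s from by omega)
        rw [this, Nat.add_sub_cancel_left]
      rw [hsign]
      have : ((p + s).choose p : ℤ) * (d.choose (p + s) : ℤ)
          = (d.choose p : ℤ) * ((d - p).choose s : ℤ) := by
        rw [← Nat.cast_mul, ← Nat.cast_mul, mul_comm ((p+s).choose p), hch]
      rw [mul_assoc, this]
      ring
    rw [Finset.sum_congr rfl hterm, ← Finset.mul_sum]
    rw [show d + 1 - p = (d - p) + 1 from by omega, Int.alternating_sum_range_choose]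
    by_cases hdp : d = p
    · rw [if_pos (by omega : d - p = 0), if_pos hdp]
      subst hdp
      rw [Nat.choose_self]
      norm_num
    · rw [if_neg (by omega : ¬ d - p = 0), if_neg hdp, mul_zero]
  · rw [if_neg (by omega : ¬ d = p)]
    apply Finset.sum_eq_zero
    intro q hq
    by_cases hqp : q < p
    · rw [Nat.choose_eq_zero_of_lt hqp, Nat.cast_zero, mul_zero, zero_mul]
    · rw [Nat.choose_eq_zero_of_lt (show d < q from by omega), Nat.cast_zero, mul_zero]

lemma card_desc (k n p : ℕ) :
    ((Finset.univ.filter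
        (fun w : Fin n → Fin (2 * k + 1) => descCount E w = p)).card : ℤ)
      = ∑ q ∈ Finset.range (n + 1),
          (-1 : ℤ) ^ (p + q) * (q.choose p : ℤ) * (c k (n - q) n : ℤ) := by
  have hc : ∀ q ∈ Finset.range (n + 1),
      (-1 : ℤ) ^ (p + q) * (q.choose p : ℤ) * (c k (n - q) n : ℤ)
        = ∑ w : Fin n → Fin (2 * k + 1),
            (-1 : ℤ) ^ (p + q) * (q.choose p : ℤ) * ((descCount E w).choose q : ℤ) := by
    intro q hq
    rw [← Finset.mul_sum]
    congr 1
    rw [← mainW k n q (Nat.lt_succ_iff.1 (Finset.mem_range.1 hq))]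
    rw [Nat.cast_sum]
  rw [Finset.sum_congr rfl hc, Finset.sum_comm]
  have hw : ∀ w : Fin n → Fin (2 * k + 1),
      (∑ q ∈ Finset.range (n + 1),
        (-1 : ℤ) ^ (p + q) * (q.choose p : ℤ) * ((descCount E w).choose q : ℤ))
        = if descCount E w = p then 1 else 0 :=
    fun w => inv_id n (descCount E w) p (descCount_le w)
  rw [Finset.sum_congr rfl fun w _ => hw w, Finset.sum_boole]

open Polynomial in
noncomputable def QP (k : ℕ) : Polynomial ℤ := (C 2 + X) * (1 + X) ^ k - C 2

open Polynomial in
lemma coeff_QP (k r : ℕ) : (QP k).coeff r = (a k r : ℤ) := by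
  have hexp : QP k = C 2 * (1 + X) ^ k + X * (1 + X) ^ k - C 2 := by rw [QP]; ring
  rw [hexp, Polynomial.coeff_sub, Polynomial.coeff_add, Polynomial.coeff_C_mul,
    Polynomial.coeff_one_add_X_pow]
  match r with
  | 0 =>
    rw [Polynomial.mul_coeff_zero, Polynomial.coeff_X_zero, zero_mul, Polynomial.coeff_C]
    simp [a]
  | r + 1 =>
    rw [Polynomial.coeff_X_mul, Polynomial.coeff_one_add_X_pow, Polynomial.coeff_C]
    simp only [a]
    push_cast
    ring

lemma coeff_QP_pow (k : ℕ) : ∀ m n, ((QP k) ^ m).coeff n = (c k m n : ℤ) := by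
  intro m
  induction m with
  | zero =>
    intro n
    rw [pow_zero, Polynomial.coeff_one, c]
    split <;> simp
  | succ m ih =>
    intro n
    rw [pow_succ', Polynomial.coeff_mul, Finset.Nat.sum_antidiagonal_eq_sum_range_succ_mk,
      c, Nat.cast_sum]
    refine Finset.sum_congr rfl fun r hr => ?_
    rw [coeff_QP, ih, Nat.cast_mul]

open Polynomial in
lemma c_eq (k m n : ℕ) (hmn : m ≤ n) :
    (c k m n : ℤ) = ∑ j ∈ Finset.range (m + 1), ∑ i ∈ Finset.range (j + 1),
      (-1 : ℤ) ^ (m - j) * 2 ^ (m - i) * (m.choose j : ℤ) * (j.choose i : ℤ)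
        * ((k * j).choose (n - i) : ℤ) := by
  rw [← coeff_QP_pow]
  have hQ : QP k = (C 2 + X) * (1 + X) ^ k + C (-2 : ℤ) := by
    rw [QP, map_neg]; ring
  rw [hQ, add_pow, Polynomial.finset_sum_coeff]
  refine Finset.sum_congr rfl fun j hj => ?_
  have hj' : j ≤ m := Nat.lt_succ_iff.1 (Finset.mem_range.1 hj)
  rw [mul_pow, ← pow_mul, ← Polynomial.C_pow,
    show ((m.choose j : ℕ) : Polynomial ℤ) = C ((m.choose j : ℕ) : ℤ) from
      (Polynomial.C_eq_natCast _),
    Polynomial.coeff_mul_C, Polynomial.coeff_mul_C, Polynomial.coeff_mul,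
    Finset.Nat.sum_antidiagonal_eq_sum_range_succ_mk]
  rw [← Finset.sum_subset (Finset.range_subset_range.2 (by omega : j + 1 ≤ n + 1))
    (fun i hi hi2 => by
      have hji : j < i := by
        have h1 := Finset.mem_range.1 hi
        have h2 : ¬ i < j + 1 := fun hcon => hi2 (Finset.mem_range.2 hcon)
        omega
      rw [show (C 2 + X : Polynomial ℤ) = X + C 2 from by ring,
        Polynomial.coeff_X_add_C_pow, Nat.choose_eq_zero_of_lt hji]
      simp)]
  rw [Finset.sum_mul, Finset.sum_mul]
  refine Finset.sum_congr rfl fun i hi => ?_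
  have hi' : i ≤ j := Nat.lt_succ_iff.1 (Finset.mem_range.1 hi)
  rw [show (C 2 + X : Polynomial ℤ) = X + C 2 from by ring,
    Polynomial.coeff_X_add_C_pow, Polynomial.coeff_one_add_X_pow]
  have hsign : ((-2 : ℤ)) ^ (m - j) = (-1) ^ (m - j) * 2 ^ (m - j) := by
    rw [show (-2 : ℤ) = (-1) * 2 from by norm_num, mul_pow]
  rw [hsign]
  have hpow : (2 : ℤ) ^ (j - i) * 2 ^ (m - j) = 2 ^ (m - i) := by
    rw [← pow_add, show j - i + (m - j) = m - i from by omega]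
  calc (2 : ℤ) ^ (j - i) * (j.choose i : ℤ) * ((k * j).choose (n - i) : ℤ)
        * ((-1) ^ (m - j) * 2 ^ (m - j)) * ((m.choose j : ℕ) : ℤ)
      = (-1 : ℤ) ^ (m - j) * (2 ^ (j - i) * 2 ^ (m - j)) * (m.choose j : ℤ)
        * (j.choose i : ℤ) * ((k * j).choose (n - i) : ℤ) := by ring
    _ = _ := by rw [hpow]

lemma rhs_final (k n p : ℕ) :
    (∑ q ∈ Finset.range (n + 1),
        (-1 : ℤ) ^ (p + q) * (q.choose p : ℤ) * (c k (n - q) n : ℤ))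
      = ∑ m ∈ Finset.range (n + 1), ∑ j ∈ Finset.range (m + 1),
          ∑ i ∈ Finset.range (j + 1),
            (-1 : ℤ) ^ (n + p + j) *
              ((2 ^ (m - i) * m.choose j * j.choose i * (k * j).choose (n - i)
                * (n - m).choose p : ℕ) : ℤ) := by
  rw [← Finset.sum_range_reflect]
  refine Finset.sum_congr rfl fun m hm => ?_
  have hm' : m ≤ n := Nat.lt_succ_iff.1 (Finset.mem_range.1 hm)
  rw [show n + 1 - 1 - m = n - m from by omega, show n - (n - m) = m from by omega,
    c_eq k m n hm', Finset.mul_sum]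
  refine Finset.sum_congr rfl fun j hj => ?_
  have hj' : j ≤ m := Nat.lt_succ_iff.1 (Finset.mem_range.1 hj)
  rw [Finset.mul_sum]
  refine Finset.sum_congr rfl fun i hi => ?_
  have hsign : (-1 : ℤ) ^ (p + (n - m)) * (-1) ^ (m - j) = (-1) ^ (n + p + j) := by
    rw [← pow_add, show p + (n - m) + (m - j) = p + n - j from by omega,
      show n + p + j = (p + n - j) + 2 * j from by omega, pow_add, pow_mul]
    norm_num
  rw [← hsign]
  push_cast
  ring

lemma rise_eq (k n : ℕ) (w : Fin n → Fin (2 * k + 1)) :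
    riseCount E w = descCount E (fun i => (w i).rev) := by
  rw [riseCount, descCount]
  congr 1
  apply Finset.filter_congr
  intro x _
  have h1 := (w x.1).isLt
  have h2 := (w x.2).isLt
  have hr1 : ((w x.1).rev : ℕ) = 2 * k - (w x.1 : ℕ) := by rw [Fin.val_rev]; omega
  have hr2 : ((w x.2).rev : ℕ) = 2 * k - (w x.2 : ℕ) := by rw [Fin.val_rev]; omega
  rw [hr1, hr2]
  constructor
  · rintro ⟨ha, hb, hc1, hc2⟩
    exact ⟨ha, by omega, by omega, by omega⟩
  · rintro ⟨ha, hb, hc1, hc2⟩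
    exact ⟨ha, by omega, by omega, by omega⟩

lemma rise_card (k n p : ℕ) :
    (Finset.univ.filter
        (fun w : Fin n → Fin (2 * k + 1) => riseCount E w = p)).card
      = (Finset.univ.filter
        (fun w : Fin n → Fin (2 * k + 1) => descCount E w = p)).card := by
  apply Finset.card_bij (fun (w : Fin n → Fin (2 * k + 1)) _ => fun i => (w i).rev)
  · intro w hw
    rw [Finset.mem_filter] at hw ⊢
    exact ⟨Finset.mem_univ _, by rw [← rise_eq]; exact hw.2⟩
  · intro w1 h1 w2 h2 heq
    funext i
    have := congrFun heq i
    have h3 := congrArg Fin.rev this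
    rwa [Fin.rev_rev, Fin.rev_rev] at h3
  · intro w hw
    rw [Finset.mem_filter] at hw
    refine ⟨fun i => (w i).rev, ?_, ?_⟩
    · rw [Finset.mem_filter]
      refine ⟨Finset.mem_univ _, ?_⟩
      rw [rise_eq]
      have hrw : (fun i => ((w i).rev).rev) = w := funext fun i => Fin.rev_rev _
      rw [hrw]
      exact hw.2
    · funext i
      exact Fin.rev_rev _

end Stmt13


/- `E = {2,4,6,…}` is encoded as `fun x => 0 < x ∧ x % 2 = 0`. -/
theorem stmt_13 (k n p : ℕ) :
    ((Finset.univ.filter (fun w : Fin n → Fin (2 * k + 1) =>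
          descCount (fun x => 0 < x ∧ x % 2 = 0) w = p)).card : ℤ)
        = ∑ m ∈ Finset.range (n + 1), ∑ j ∈ Finset.range (m + 1),
            ∑ i ∈ Finset.range (j + 1),
              (-1 : ℤ) ^ (n + p + j) *
                ((2 ^ (m - i) * m.choose j * j.choose i * (k * j).choose (n - i)
                  * (n - m).choose p : ℕ) : ℤ)
      ∧ ((Finset.univ.filter (fun w : Fin n → Fin (2 * k + 1) =>
            riseCount (fun x => 0 < x ∧ x % 2 = 0) w = p)).card : ℤ)
        = ∑ m ∈ Finset.range (n + 1), ∑ j ∈ Finset.range (m + 1),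
            ∑ i ∈ Finset.range (j + 1),
              (-1 : ℤ) ^ (n + p + j) *
                ((2 ^ (m - i) * m.choose j * j.choose i * (k * j).choose (n - i)
                  * (n - m).choose p : ℕ) : ℤ) := by
  constructor
  · exact (Stmt13.card_desc k n p).trans (Stmt13.rhs_final k n p)
  · exact (congrArg (Nat.cast : ℕ → ℤ) (Stmt13.rise_card k n p)).trans
      ((Stmt13.card_desc k n p).trans (Stmt13.rhs_final k n p))
end
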